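/- arXiv:1303.6318 — 7 statements merged into one kernel-verified Lean document; each statement's English description precedes it below -/
import Mathlib

section
/- Let ε : H → G be a central extension. Then H is perfect if and only if for every central extension ζ : H' → G there exists at most one group homomorphism η : H → H' satisfying ζ ∘ η = ε. -/
universe u

/-- A central extension: a surjective group homomorphism whose kernel is central. -/
structure IsCentralExtension {H : Type*} {G : Type*} [Group H] [Group G]
    (ε : H →* G) : Prop where
  surjective : Function.Surjective ε
  central : ε.ker ≤ Subgroup.center H

/-- Let `ε : H → G` be a central extension.  Then `H` is perfect if and only if for
every central extension `ζ : H' → G` there is at most one homomorphism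
`η : H → H'` with `ζ ∘ η = ε`. -/
theorem perfect_iff_at_most_one_lift {H G : Type u} [Group H] [Group G]
    (ε : H →* G) (hε : IsCentralExtension ε) :
    commutator H = ⊤ ↔
      ∀ (H' : Type u) [Group H'], ∀ ζ : H' →* G, IsCentralExtension ζ →
        ∀ η θ : H →* H', ζ.comp η = ε → ζ.comp θ = ε → η = θ := by
  constructor
  · intro hperf H' _ ζ hζ η θ hη hθ
    -- for each h, η h * (θ h)⁻¹ is central
    have key : ∀ h : H, η h * (θ h)⁻¹ ∈ Subgroup.center H' := by
      intro h
      apply hζ.central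
      rw [MonoidHom.mem_ker, map_mul, map_inv]
      have h1 : ζ (η h) = ε h := congrFun (congrArg DFunLike.coe hη) h
      have h2 : ζ (θ h) = ε h := congrFun (congrArg DFunLike.coe hθ) h
      rw [h1, h2, mul_inv_cancel]
    -- package the difference as a homomorphism into the (abelian) center
    have φmul : ∀ a b : H,
        η (a * b) * (θ (a * b))⁻¹ = (η a * (θ a)⁻¹) * (η b * (θ b)⁻¹) := by
      intro a b
      have cb := Subgroup.mem_center_iff.mp (key b)
      calc η (a * b) * (θ (a * b))⁻¹
          = η a * (η b * (θ b)⁻¹ * (θ a)⁻¹) := by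
            rw [map_mul, map_mul, mul_inv_rev]; group
        _ = η a * ((θ a)⁻¹ * (η b * (θ b)⁻¹)) := by rw [cb (θ a)⁻¹]
        _ = (η a * (θ a)⁻¹) * (η b * (θ b)⁻¹) := by rw [← mul_assoc]
    let φ : H →* Subgroup.center H' :=
      { toFun := fun h => ⟨η h * (θ h)⁻¹, key h⟩
        map_one' := by simp
        map_mul' := fun a b => Subtype.ext (φmul a b) }
    -- φ has abelian codomain, so it kills commutator H = ⊤
    have hker : commutator H ≤ φ.ker := open scoped IsMulCommutative in Abelianization.commutator_subset_ker φ
    rw [hperf, top_le_iff] at hker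
    ext h
    have : φ h = 1 := by rw [← MonoidHom.mem_ker, hker]; trivial
    have : η h * (θ h)⁻¹ = 1 := congrArg Subtype.val this
    rw [← mul_inv_eq_one]
    exact this
  · intro huniq
    by_contra hne
    -- build the counterexample: H' = H × Abelianization H
    set A := Abelianization H
    set ζ : H × A →* G := ε.comp (MonoidHom.fst H A) with hζdef
    have hζ : IsCentralExtension ζ := by
      constructor
      · intro g
        obtain ⟨h, hh⟩ := hε.surjective g
        exact ⟨(h, 1), hh⟩
      · rintro ⟨h, a⟩ hmem
        have hh : h ∈ Subgroup.center H := hε.central hmem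
        rw [Subgroup.mem_center_iff]
        rintro ⟨x, b⟩
        exact Prod.ext (Subgroup.mem_center_iff.mp hh x) (mul_comm b a)
    set η : H →* H × A := (MonoidHom.id H).prod 1 with hηdef
    set θ : H →* H × A := (MonoidHom.id H).prod Abelianization.of with hθdef
    have h1 : ζ.comp η = ε := by ext h; rfl
    have h2 : ζ.comp θ = ε := by ext h; rfl
    have heq := huniq (H × A) ζ hζ η θ h1 h2
    -- but η ≠ θ since Abelianization H is nontrivial
    obtain ⟨h, hh⟩ : ∃ h : H, h ∉ commutator H := by
      by_contra hc
      push_neg at hc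
      exact hne ((Subgroup.eq_top_iff' (commutator H)).mpr hc)
    have : η h = θ h := by rw [heq]
    have : (1 : A) = Abelianization.of h := congrArg Prod.snd this
    exact hh ((QuotientGroup.eq_one_iff h).mp this.symm)
end

section
/- Every perfect group admits a universal central extension. -/
universe u

/-- A universal central extension: a central extension through which every central
extension factors uniquely. -/
def IsUniversalCentralExtension {U G : Type u} [Group U] [Group G] (π : U →* G) : Prop :=
  IsCentralExtension π ∧
    ∀ (H : Type u) [Group H], ∀ ε : H →* G, IsCentralExtension ε →
      ∃! η : U →* H, ε.comp η = π

/-- A group together with a homomorphism to `G`. -/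
structure GroupOver (G : Type u) [Group G] where
  carrier : Type u
  [grp : Group carrier]
  map : carrier →* G

attribute [instance] GroupOver.grp

open scoped commutatorElement

lemma commutatorElement_mul_right_center {H : Type*} [Group H] {w : H}
    (hw : w ∈ Subgroup.center H) (x y : H) : ⁅x, y * w⁆ = ⁅x, y⁆ := by
  have key : ∀ s t : H, w * (s * t) = s * (w * t) := fun s t => by
    rw [← mul_assoc, (Subgroup.mem_center_iff.mp hw s).symm, mul_assoc]
  simp only [commutatorElement_def, mul_inv_rev, mul_assoc]
  rw [key, mul_inv_cancel_left]

lemma commutatorElement_mul_left_center {H : Type*} [Group H] {z : H}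
    (hz : z ∈ Subgroup.center H) (x y : H) : ⁅x * z, y⁆ = ⁅x, y⁆ := by
  have key : ∀ s t : H, z * (s * t) = s * (z * t) := fun s t => by
    rw [← mul_assoc, (Subgroup.mem_center_iff.mp hz s).symm, mul_assoc]
  simp only [commutatorElement_def, mul_inv_rev, mul_assoc]
  rw [key, mul_inv_cancel_left]

lemma commutatorElement_mul_center {H : Type*} [Group H] {z w : H}
    (hz : z ∈ Subgroup.center H) (hw : w ∈ Subgroup.center H) (a b : H) :
    ⁅a * z, b * w⁆ = ⁅a, b⁆ := by
  rw [commutatorElement_mul_right_center hw, commutatorElement_mul_left_center hz]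

namespace UCEAux

variable (G : Type u) [Group G]

/-- the canonical projection from the free group. -/
def pr : FreeGroup G →* G := FreeGroup.lift id

lemma pr_surj : Function.Surjective (pr G) := fun g => ⟨FreeGroup.of g, FreeGroup.lift_apply_of⟩

/-- the subgroup `⁅R, F⁆` for `R` the kernel of `pr`. -/
def Z : Subgroup (FreeGroup G) := ⁅(pr G).ker, (⊤ : Subgroup (FreeGroup G))⁆

instance : (Z G).Normal := Subgroup.commutator_normal _ _

lemma Z_le_ker : Z G ≤ (pr G).ker := Subgroup.commutator_le_left _ _

/-- the quotient `F ⧸ ⁅R, F⁆`. -/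
def E : Type u := FreeGroup G ⧸ Z G

instance : Group (E G) := QuotientGroup.Quotient.group (Z G)

/-- quotient map. -/
def mkE : FreeGroup G →* E G := QuotientGroup.mk' (Z G)

lemma mkE_surj : Function.Surjective (mkE G) := QuotientGroup.mk'_surjective _

/-- induced projection `E → G`. -/
def prE : E G →* G := QuotientGroup.lift (Z G) (pr G) (Z_le_ker G)

@[simp] lemma prE_mkE (f : FreeGroup G) : prE G (mkE G f) = pr G f := rfl

lemma prE_surj : Function.Surjective (prE G) := fun g => by
  obtain ⟨f, hf⟩ := pr_surj G g
  exact ⟨mkE G f, hf⟩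

lemma ker_prE_central : (prE G).ker ≤ Subgroup.center (E G) := by
  intro x hx
  obtain ⟨f, rfl⟩ := mkE_surj G x
  have hf : f ∈ (pr G).ker := by simpa [MonoidHom.mem_ker] using hx
  rw [Subgroup.mem_center_iff]
  intro y
  obtain ⟨g, rfl⟩ := mkE_surj G y
  rw [← map_mul, ← map_mul]
  have : (g * f)⁻¹ * (f * g) = ⁅f⁻¹, g⁻¹⁆ := by group
  exact (QuotientGroup.eq).mpr (this ▸ Subgroup.commutator_mem_commutator
    ((pr G).ker.inv_mem hf) (Subgroup.mem_top _))

/-- the commutator subgroup of `E`. -/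
def E' : Subgroup (E G) := commutator (E G)

/-- the universal central extension as a type. -/
@[reducible] def U : Type u := ↥(E' G)

instance : Group (U G) := by unfold U; infer_instance

/-- the projection `U → G`. -/
def mapU : U G →* G := (prE G).comp (E' G).subtype

variable {G}

lemma map_E'_eq_top (hG : commutator G = ⊤) : (E' G).map (prE G) = ⊤ := by
  rw [E', commutator_def, Subgroup.map_commutator,
    Subgroup.map_top_of_surjective _ (prE_surj G), ← commutator_def, hG]

lemma mapU_surj (hG : commutator G = ⊤) : Function.Surjective (mapU G) := by
  intro g
  have : g ∈ (E' G).map (prE G) := by rw [map_E'_eq_top hG]; trivial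
  obtain ⟨e, he, rfl⟩ := this
  exact ⟨⟨e, he⟩, rfl⟩

lemma exists_decomp (hG : commutator G = ⊤) (x : E G) : ∃ c ∈ E' G, ∃ z ∈ Subgroup.center (E G), x = c * z := by
  have : prE G x ∈ (E' G).map (prE G) := by rw [map_E'_eq_top hG]; trivial
  obtain ⟨c, hc, hce⟩ := this
  refine ⟨c, hc, c⁻¹ * x, ker_prE_central G ?_, by group⟩
  rw [MonoidHom.mem_ker, map_mul, map_inv, hce, inv_mul_cancel]

lemma E'_perfect (hG : commutator G = ⊤) : ⁅E' G, E' G⁆ = E' G := by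
  refine le_antisymm (Subgroup.commutator_le.mpr fun a ha b hb =>
    Subgroup.commutator_mem_commutator (Subgroup.mem_top a) (Subgroup.mem_top b)) ?_
  rw [E', commutator_def]
  refine Subgroup.commutator_le.mpr fun x _ y _ => ?_
  obtain ⟨c, hc, z, hz, rfl⟩ := exists_decomp hG x
  obtain ⟨d, hd, w, hw, rfl⟩ := exists_decomp hG y
  rw [commutatorElement_mul_center hz hw]
  exact Subgroup.commutator_mem_commutator hc hd

lemma U_perfect (hG : commutator G = ⊤) : commutator (U G) = ⊤ := by
  apply Subgroup.map_injective (E' G).subtype_injective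
  have htop : Subgroup.map (E' G).subtype ⊤ = E' G := by
    rw [← MonoidHom.range_eq_map, Subgroup.range_subtype]
  rw [commutator_def, Subgroup.map_commutator, htop, E'_perfect hG]



lemma mapU_central : (mapU G).ker ≤ Subgroup.center (U G) := by
  intro u hu
  have h1 : (u : E G) ∈ Subgroup.center (E G) := by
    apply ker_prE_central G
    simpa [MonoidHom.mem_ker, mapU] using hu
  rw [Subgroup.mem_center_iff]
  intro v
  exact Subtype.ext (Subgroup.mem_center_iff.mp h1 (v : E G))

lemma eq_of_center {A B : Type*} [Group A] [Group B] (hA : commutator A = ⊤)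
    (η₁ η₂ : A →* B) (h : ∀ a, (η₁ a)⁻¹ * η₂ a ∈ Subgroup.center B) : η₁ = η₂ := by
  apply MonoidHom.eq_of_eqOn_dense ((commutator_eq_closure A) ▸ hA)
  rintro x ⟨a, b, rfl⟩
  have ea : η₂ a = η₁ a * ((η₁ a)⁻¹ * η₂ a) := by group
  have eb : η₂ b = η₁ b * ((η₁ b)⁻¹ * η₂ b) := by group
  calc η₁ ⁅a, b⁆ = ⁅η₁ a, η₁ b⁆ := map_commutatorElement _ _ _
    _ = ⁅η₂ a, η₂ b⁆ := by
        rw [ea, eb, commutatorElement_mul_center (h a) (h b)]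
    _ = η₂ ⁅a, b⁆ := (map_commutatorElement _ _ _).symm

end UCEAux

theorem main (G : Type u) [Group G] (hG : commutator G = ⊤)
    (H : Type u) [Group H] (ε : H →* G) (hε : IsCentralExtension ε) :
    ∃! η : UCEAux.U G →* H, ε.comp η = UCEAux.mapU G := by
  classical
  open UCEAux in
  have hs : ∀ g, ε ((hε.surjective g).choose) = g := fun g => (hε.surjective g).choose_spec
  let φ : FreeGroup G →* H := FreeGroup.lift (fun g => (hε.surjective g).choose)
  have hεφ : ε.comp φ = pr G := FreeGroup.ext_hom _ _ (fun g => by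
    simp only [MonoidHom.comp_apply, FreeGroup.lift_apply_of, φ, pr]
    exact hs g)
  have hZker : Z G ≤ φ.ker := by
    refine Subgroup.commutator_le.mpr fun r hr f _ => ?_
    have hc : φ r ∈ Subgroup.center H := hε.central (by
      rw [MonoidHom.mem_ker, ← MonoidHom.comp_apply, hεφ]; exact hr)
    rw [MonoidHom.mem_ker, map_commutatorElement]
    exact commutatorElement_eq_one_iff_commute.mpr
      (Subgroup.mem_center_iff.mp hc (φ f)).symm
  let φbar : E G →* H := QuotientGroup.lift (Z G) φ hZker
  have hεφbar : ε.comp φbar = prE G := QuotientGroup.monoidHom_ext (Z G) (by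
    ext f
    exact DFunLike.congr_fun hεφ (FreeGroup.of f))
  have hη : ε.comp (φbar.comp (E' G).subtype) = mapU G := by
    rw [mapU, ← hεφbar, MonoidHom.comp_assoc]
  refine ⟨φbar.comp (E' G).subtype, hη, ?_⟩
  intro η' hη'
  refine eq_of_center (U_perfect hG) _ _ fun u => hε.central ?_
  rw [MonoidHom.mem_ker, map_mul, map_inv, ← MonoidHom.comp_apply,
    ← MonoidHom.comp_apply, hη, hη', inv_mul_cancel]

/-- Every perfect group admits a universal central extension. -/
theorem exists_universal_central_extension (G : Type u) [Group G]
    (hG : commutator G = ⊤) :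
    ∃ E : GroupOver G, IsUniversalCentralExtension E.map := by
  exact ⟨{ carrier := UCEAux.U G, grp := inferInstance, map := UCEAux.mapU G },
    ⟨UCEAux.mapU_surj hG, UCEAux.mapU_central (G := G)⟩,
    fun H _ ε hε => main G hG H ε hε⟩
end

section
/- Let G be a perfect group, let φ : F → G be a surjective homomorphism from a free group F, and let R = ker φ. Then the group [F,F]/[R,F] is perfect, and the homomorphism π : [F,F]/[R,F] → G induced by φ is a universal central extension of G whose kernel is (R ∩ [F,F])/[R,F]. -/
universe u

variable {G : Type u} [Group G] {α : Type u}

/-- The subgroup `[R, F]` of the free group `F = FreeGroup α`, where `R = ker φ`. -/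
abbrev commKer (φ : FreeGroup α →* G) : Subgroup (FreeGroup α) :=
  ⁅φ.ker, (⊤ : Subgroup (FreeGroup α))⁆

/-- The map `F/[R,F] → G` induced by `φ`. -/
def liftBar (φ : FreeGroup α →* G) : (FreeGroup α ⧸ commKer φ) →* G :=
  QuotientGroup.lift (commKer φ) φ
    (fun _ hx => Subgroup.commutator_le_left φ.ker ⊤ hx)

/-- The map `π : [F,F]/[R,F] → G`: the restriction of `liftBar φ` to the commutator
subgroup of `F/[R,F]` (which is the image of `[F,F]`). -/
def uceMap (φ : FreeGroup α →* G) :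
    ↥(commutator (FreeGroup α ⧸ commKer φ)) →* G :=
  (liftBar φ).comp (commutator (FreeGroup α ⧸ commKer φ)).subtype

/- ### Auxiliary lemmas -/

open scoped commutatorElement

lemma ker_liftBar (φ : FreeGroup α →* G) :
    (liftBar φ).ker = φ.ker.map (QuotientGroup.mk' (commKer φ)) := by
  ext x
  constructor
  · intro hx
    obtain ⟨f, rfl⟩ := QuotientGroup.mk'_surjective (commKer φ) x
    exact ⟨f, hx, rfl⟩
  · rintro ⟨f, hf, rfl⟩
    exact hf

lemma kerBar_central (φ : FreeGroup α →* G) :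
    φ.ker.map (QuotientGroup.mk' (commKer φ)) ≤
      Subgroup.center (FreeGroup α ⧸ commKer φ) := by
  rintro x ⟨r, hr, rfl⟩
  rw [Subgroup.mem_center_iff]
  intro q
  obtain ⟨f, rfl⟩ := QuotientGroup.mk'_surjective (commKer φ) q
  rw [← map_mul, ← map_mul]
  show ((f * r : FreeGroup α) : FreeGroup α ⧸ commKer φ) = ((r * f : FreeGroup α) : _)
  rw [QuotientGroup.eq]
  have he : (f * r)⁻¹ * (r * f) = ⁅r⁻¹, f⁻¹⁆ := by
    rw [commutatorElement_def]; group
  rw [he]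
  exact Subgroup.commutator_mem_commutator (φ.ker.inv_mem hr) (Subgroup.mem_top _)

lemma ker_liftBar_central (φ : FreeGroup α →* G) :
    (liftBar φ).ker ≤ Subgroup.center (FreeGroup α ⧸ commKer φ) := by
  rw [ker_liftBar]; exact kerBar_central φ

lemma commutator_bar (φ : FreeGroup α →* G) :
    commutator (FreeGroup α ⧸ commKer φ) =
      (commutator (FreeGroup α)).map (QuotientGroup.mk' (commKer φ)) := by
  rw [commutator_def, commutator_def, Subgroup.map_commutator,
    Subgroup.map_top_of_surjective _ (QuotientGroup.mk'_surjective _)]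

lemma uceMap_surjective (hG : commutator G = ⊤) (φ : FreeGroup α →* G)
    (hφ : Function.Surjective φ) : Function.Surjective (uceMap φ) := by
  intro g
  have h1 : (commutator (FreeGroup α)).map φ = ⊤ := by
    rw [commutator_def, Subgroup.map_commutator, Subgroup.map_top_of_surjective _ hφ,
      ← commutator_def, hG]
  have hg : g ∈ (commutator (FreeGroup α)).map φ := h1 ▸ Subgroup.mem_top g
  obtain ⟨f, hf, rfl⟩ := hg
  refine ⟨⟨QuotientGroup.mk' (commKer φ) f, ?_⟩, rfl⟩
  rw [commutator_bar]
  exact ⟨f, hf, rfl⟩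

lemma commMulCentral {Q : Type u} [Group Q] {z₁ z₂ : Q}
    (h₁ : z₁ ∈ Subgroup.center Q) (h₂ : z₂ ∈ Subgroup.center Q) (c₁ c₂ : Q) :
    ⁅c₁ * z₁, c₂ * z₂⁆ = ⁅c₁, c₂⁆ := by
  have H₁ : ∀ g : Q, z₁ * g = g * z₁ := fun g => (Subgroup.mem_center_iff.mp h₁ g).symm
  have H₂ : ∀ g : Q, z₂ * g = g * z₂ := fun g => (Subgroup.mem_center_iff.mp h₂ g).symm
  simp only [commutatorElement_def, mul_inv_rev]
  calc c₁ * z₁ * (c₂ * z₂) * (z₁⁻¹ * c₁⁻¹) * (z₂⁻¹ * c₂⁻¹)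
      = c₁ * (z₁ * c₂) * z₂ * z₁⁻¹ * c₁⁻¹ * z₂⁻¹ * c₂⁻¹ := by group
    _ = c₁ * (c₂ * z₁) * z₂ * z₁⁻¹ * c₁⁻¹ * z₂⁻¹ * c₂⁻¹ := by rw [H₁]
    _ = c₁ * c₂ * (z₁ * z₂) * z₁⁻¹ * c₁⁻¹ * z₂⁻¹ * c₂⁻¹ := by group
    _ = c₁ * c₂ * (z₂ * z₁) * z₁⁻¹ * c₁⁻¹ * z₂⁻¹ * c₂⁻¹ := by rw [H₁]
    _ = c₁ * c₂ * (z₂ * c₁⁻¹) * z₂⁻¹ * c₂⁻¹ := by group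
    _ = c₁ * c₂ * (c₁⁻¹ * z₂) * z₂⁻¹ * c₂⁻¹ := by rw [H₂]
    _ = c₁ * c₂ * c₁⁻¹ * c₂⁻¹ := by group

lemma uce_perfect (hG : commutator G = ⊤) (φ : FreeGroup α →* G)
    (hφ : Function.Surjective φ) :
    commutator ↥(commutator (FreeGroup α ⧸ commKer φ)) = ⊤ := by
  set Q := FreeGroup α ⧸ commKer φ
  set C : Subgroup Q := commutator Q with hC
  have hsurj := uceMap_surjective hG φ hφ
  have decomp : ∀ q : Q, ∃ c : ↥C, (c : Q)⁻¹ * q ∈ Subgroup.center Q := by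
    intro q
    obtain ⟨c, hc⟩ := hsurj (liftBar φ q)
    refine ⟨c, ker_liftBar_central φ ?_⟩
    have : liftBar φ (c : Q) = liftBar φ q := hc
    rw [MonoidHom.mem_ker, map_mul, map_inv, this, inv_mul_cancel]
  have key : C ≤ ⁅C, C⁆ := by
    rw [hC, commutator_def, Subgroup.commutator_le]
    intro q₁ _ q₂ _
    obtain ⟨c₁, hz₁⟩ := decomp q₁
    obtain ⟨c₂, hz₂⟩ := decomp q₂
    have e₁ : q₁ = (c₁ : Q) * ((c₁ : Q)⁻¹ * q₁) := by group
    have e₂ : q₂ = (c₂ : Q) * ((c₂ : Q)⁻¹ * q₂) := by group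
    rw [e₁, e₂, commMulCentral hz₁ hz₂]
    exact Subgroup.commutator_mem_commutator c₁.2 c₂.2
  have hCC : ⁅C, C⁆ = C := by
    refine le_antisymm ?_ key
    calc ⁅C, C⁆ ≤ ⁅⊤, ⊤⁆ := Subgroup.commutator_mono le_top le_top
      _ = C := (commutator_def Q).symm
  have h1 : (commutator ↥C).map C.subtype = C := by
    rw [commutator_def, Subgroup.map_commutator, ← MonoidHom.range_eq_map,
      Subgroup.range_subtype, hCC]
  have h2 : (⊤ : Subgroup ↥C).map C.subtype = C := by
    rw [← MonoidHom.range_eq_map, Subgroup.range_subtype]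
  exact Subgroup.map_injective C.subtype_injective (h1.trans h2.symm)

/-- If `G` is perfect and `φ : F ↠ G` with `F` free and `R = ker φ`, then
`[F,F]/[R,F]` is perfect, the induced map `π : [F,F]/[R,F] → G` is a universal
central extension, and `ker π = (R ⊓ [F,F])/[R,F]`. -/
theorem free_presentation_gives_uce (hG : commutator G = ⊤)
    (φ : FreeGroup α →* G) (hφ : Function.Surjective φ) :
    commutator ↥(commutator (FreeGroup α ⧸ commKer φ)) = ⊤ ∧
    IsUniversalCentralExtension (uceMap φ) ∧
    (uceMap φ).ker.map (commutator (FreeGroup α ⧸ commKer φ)).subtype =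
      (φ.ker ⊓ commutator (FreeGroup α)).map (QuotientGroup.mk' (commKer φ)) := by
  classical
  set Q := FreeGroup α ⧸ commKer φ with hQ
  set C : Subgroup Q := commutator Q with hC
  have hperfect := uce_perfect hG φ hφ
  have hsurj := uceMap_surjective hG φ hφ
  have hcent : (uceMap φ).ker ≤ Subgroup.center ↥C := by
    intro x hx
    have hxc : (x : Q) ∈ Subgroup.center Q := ker_liftBar_central φ hx
    rw [Subgroup.mem_center_iff]
    intro y
    ext
    exact Subgroup.mem_center_iff.mp hxc (y : Q)
  refine ⟨hperfect, ⟨⟨hsurj, hcent⟩, ?_⟩, ?_⟩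
  · -- universality
    intro H _ ε hε
    set ψ : FreeGroup α →* H :=
      FreeGroup.lift fun a => (hε.surjective (φ (FreeGroup.of a))).choose with hψ
    have hcomp : ε.comp ψ = φ := by
      apply FreeGroup.ext_hom
      intro a
      simp only [hψ, MonoidHom.comp_apply, FreeGroup.lift_apply_of]
      exact (hε.surjective (φ (FreeGroup.of a))).choose_spec
    have hψN : commKer φ ≤ ψ.ker := by
      rw [Subgroup.commutator_le]
      intro r hr f _
      have hrk : ψ r ∈ ε.ker := by
        rw [MonoidHom.mem_ker, ← MonoidHom.comp_apply, hcomp]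
        exact hr
      have hcen := hε.central hrk
      rw [MonoidHom.mem_ker, map_commutatorElement,
        commutatorElement_eq_one_iff_mul_comm]
      exact (Subgroup.mem_center_iff.mp hcen (ψ f)).symm
    set ψbar : Q →* H := QuotientGroup.lift (commKer φ) ψ (fun x hx => hψN hx) with hψbar
    have hbar : ε.comp ψbar = liftBar φ := by
      apply QuotientGroup.monoidHom_ext
      ext f
      show ε (ψ (FreeGroup.of f)) = φ (FreeGroup.of f)
      rw [← MonoidHom.comp_apply, hcomp]
    have hη : ε.comp (ψbar.comp C.subtype) = uceMap φ := by
      rw [← MonoidHom.comp_assoc, hbar]; rfl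
    refine ⟨ψbar.comp C.subtype, hη, ?_⟩
    intro η' hη'
    set η := ψbar.comp C.subtype
    have hdc : ∀ x : ↥C, η' x * (η x)⁻¹ ∈ Subgroup.center H := by
      intro x
      apply hε.central
      rw [MonoidHom.mem_ker, map_mul, map_inv]
      have e₁ : ε (η' x) = uceMap φ x := DFunLike.congr_fun hη' x
      have e₂ : ε (η x) = uceMap φ x := DFunLike.congr_fun hη x
      rw [e₁, e₂, mul_inv_cancel]
    have hδmul : ∀ x y : ↥C,
        η' (x * y) * (η (x * y))⁻¹ = (η' x * (η x)⁻¹) * (η' y * (η y)⁻¹) := by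
      intro x y
      have hy := Subgroup.mem_center_iff.mp (hdc y)
      have hx := Subgroup.mem_center_iff.mp (hdc x)
      calc η' (x * y) * (η (x * y))⁻¹
          = η' x * (η' y * (η y)⁻¹) * (η x)⁻¹ := by
            rw [map_mul, map_mul, mul_inv_rev]; group
        _ = (η' y * (η y)⁻¹) * (η' x * (η x)⁻¹) := by rw [hy (η' x), mul_assoc]
        _ = (η' x * (η x)⁻¹) * (η' y * (η y)⁻¹) := by rw [hx]
    set δ : ↥C →* H :=
      { toFun := fun x => η' x * (η x)⁻¹
        map_one' := by simp
        map_mul' := hδmul } with hδ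
    have hδ1 : ∀ x : ↥C, δ x = 1 := by
      have main : ∀ x ∈ commutator ↥C, δ x = 1 := by
        intro x hx
        rw [commutator_def] at hx
        induction hx using Subgroup.closure_induction with
        | mem g hg =>
          obtain ⟨p, -, q, -, rfl⟩ := hg
          rw [map_commutatorElement, commutatorElement_eq_one_iff_mul_comm]
          exact (Subgroup.mem_center_iff.mp (hdc p) (δ q)).symm
        | one => exact map_one δ
        | mul a b ha hb iha ihb => rw [map_mul, iha, ihb, mul_one]
        | inv a ha iha => rw [map_inv, iha, inv_one]
      intro x
      exact main x (by rw [hperfect]; trivial)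
    ext x
    have := hδ1 x
    rw [hδ] at this
    exact mul_inv_eq_one.mp this
  · -- kernel computation
    have hker : (uceMap φ).ker = ((liftBar φ).ker).subgroupOf C := rfl
    rw [hker, Subgroup.subgroupOf_map_subtype, ker_liftBar, commutator_bar]
    have hsub : commKer φ ≤ commutator (FreeGroup α) := by
      rw [commutator_def]
      exact Subgroup.commutator_mono le_top le_top
    refine le_antisymm ?_
      (le_inf (Subgroup.map_mono inf_le_left) (Subgroup.map_mono inf_le_right))
    rintro x ⟨⟨r, hr, rfl⟩, hx2⟩
    obtain ⟨d, hd, hdr⟩ := hx2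
    obtain ⟨n, hn, hdn⟩ := (QuotientGroup.mk'_eq_mk' (commKer φ)).mp hdr
    have hrc : r ∈ commutator (FreeGroup α) := by
      rw [← hdn]
      exact mul_mem hd (hsub hn)
    exact ⟨r, ⟨hr, hrc⟩, rfl⟩
end

section
/- Let ε : H → G be a central extension with H centrally closed. Then ε is a universal central extension of G. -/
universe u

/-- Two lifts through a central extension from a perfect group agree. -/
lemma lifts_eq {H K G : Type*} [Group H] [Group K] [Group G]
    (hperf : commutator H = ⊤) (ε' : K →* G) (hc : ε'.ker ≤ Subgroup.center K)
    (η₁ η₂ : H →* K) (h : ε'.comp η₁ = ε'.comp η₂) : η₁ = η₂ := by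
  have hcent : ∀ h : H, η₁ h * (η₂ h)⁻¹ ∈ Subgroup.center K := by
    intro h'
    apply hc
    have := congrArg (fun f : H →* G => f h') h
    simp only [MonoidHom.comp_apply] at this
    simp [MonoidHom.mem_ker, this]
  let f : H →* K :=
    { toFun := fun h => η₁ h * (η₂ h)⁻¹
      map_one' := by simp
      map_mul' := by
        intro a b
        have hca := (Subgroup.mem_center_iff.mp (hcent a))
        have hcb := (Subgroup.mem_center_iff.mp (hcent b))
        show η₁ (a * b) * (η₂ (a * b))⁻¹ = η₁ a * (η₂ a)⁻¹ * (η₁ b * (η₂ b)⁻¹)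
        calc η₁ (a * b) * (η₂ (a * b))⁻¹
            = η₁ a * (η₁ b * (η₂ b)⁻¹) * (η₂ a)⁻¹ := by
              simp only [map_mul, mul_inv_rev]; group
          _ = η₁ a * (η₂ a)⁻¹ * (η₁ b * (η₂ b)⁻¹) := by
              rw [mul_assoc (η₁ a), ← hcb ((η₂ a)⁻¹), ← mul_assoc] }
  have hker : ∀ h : H, f h = 1 := by
    have : (⊤ : Subgroup H) ≤ f.ker := by
      rw [← hperf, commutator_def]
      rw [Subgroup.commutator_le]
      intro a _ b _
      rw [MonoidHom.mem_ker, map_commutatorElement]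
      rw [commutatorElement_eq_one_iff_commute]
      show f a * f b = f b * f a
      exact Subgroup.mem_center_iff.mp (hcent b) (f a)
    intro h'
    exact this (Subgroup.mem_top h')
  ext h'
  have := hker h'
  simp only [f, MonoidHom.coe_mk, OneHom.coe_mk] at this
  exact mul_inv_eq_one.mp this

/-- A central extension with centrally closed domain (perfect, and the identity map is
a universal central extension of it) is a universal central extension. -/
theorem uce_of_centrally_closed {H G : Type u} [Group H] [Group G]
    (ε : H →* G) (hε : IsCentralExtension ε)
    (hperf : commutator H = ⊤)
    (hcc : IsUniversalCentralExtension (MonoidHom.id H)) :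
    IsUniversalCentralExtension ε := by
  refine ⟨hε, ?_⟩
  intro K _ ε' hε'
  -- pullback
  let P : Subgroup (H × K) :=
    { carrier := {p | ε p.1 = ε' p.2}
      one_mem' := by simp
      mul_mem' := by
        intro a b ha hb
        simp only [Set.mem_setOf_eq, Prod.fst_mul, Prod.snd_mul, map_mul] at *
        rw [ha, hb]
      inv_mem' := by
        intro a ha
        simp only [Set.mem_setOf_eq, Prod.fst_inv, Prod.snd_inv, map_inv] at *
        rw [ha] }
  let fst' : P →* H := (MonoidHom.fst H K).comp P.subtype
  have hsurj : Function.Surjective fst' := by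
    intro h
    obtain ⟨k, hk⟩ := hε'.surjective (ε h)
    exact ⟨⟨(h, k), hk.symm⟩, rfl⟩
  have hcentral : fst'.ker ≤ Subgroup.center P := by
    intro p hp
    have hp1 : (p : H × K).1 = 1 := hp
    have hp2 : (p : H × K).2 ∈ Subgroup.center K := by
      apply hε'.central
      have : ε (p : H × K).1 = ε' (p : H × K).2 := p.2
      rw [hp1, map_one] at this
      simp [MonoidHom.mem_ker, ← this]
    rw [Subgroup.mem_center_iff]
    intro q
    refine Subtype.ext (Prod.ext ?_ ?_)
    · show (q : H × K).1 * (p : H × K).1 = (p : H × K).1 * (q : H × K).1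
      rw [hp1]; simp
    · exact Subgroup.mem_center_iff.mp hp2 (q : H × K).2
  obtain ⟨η, hη, _⟩ := hcc.2 P fst' ⟨hsurj, hcentral⟩
  refine ⟨((MonoidHom.snd H K).comp P.subtype).comp η, ?_, ?_⟩
  · ext h
    have h1 : (η h : H × K).1 = h := by
      have := congrArg (fun f : H →* H => f h) hη
      exact this
    have h2 : ε (η h : H × K).1 = ε' (η h : H × K).2 := (η h).2
    show ε' (η h : H × K).2 = ε h
    rw [← h2, h1]
  · intro η' hη'
    apply lifts_eq hperf ε' hε'.central
    rw [hη']
    ext h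
    have h1 : (η h : H × K).1 = h := congrArg (fun f : H →* H => f h) hη
    have h2 : ε (η h : H × K).1 = ε' (η h : H × K).2 := (η h).2
    show ε h = ε' (η h : H × K).2
    rw [← h2, h1]
end

section
/- For n ≥ 3, let U₁^StU(2n,R,𝔏) be the subgroup of StU(2n,R,𝔏) generated by {X_{n,i}(a) : i ∈ Ω∖{±n}, a ∈ R} ∪ {X_n(ζ) : ζ ∈ 𝔏}, and let U₁^EU(2n,R,𝔏) be its image in EU(2n,R,𝔏) under the natural epimorphism. Then the natural epimorphism restricts to an isomorphism U₁^StU(2n,R,𝔏) ≅ U₁^EU(2n,R,𝔏); in particular, every element of U₁^StU(2n,R,𝔏) has a unique decomposition of the form X_n(ζ)·X_{n,1}(a₁)·X_{n,2}(a₂)·…·X_{n,−1}(a_{−1}). -/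
open MulOpposite
open scoped commutatorElement

universe u

/-- A pseudo-involution on a ring `R`: an additive map `a ↦ ā` such that `1̄` is
invertible (with explicit inverse `e = 1̄⁻¹`), `ā̄ = a` and `(ab)‾ = b̄·1̄⁻¹·ā`. -/
structure PseudoInvolution (R : Type*) [Ring R] where
  bar : R → R
  bar_add : ∀ a b : R, bar (a + b) = bar a + bar b
  e : R
  e_bar_one : e * bar 1 = 1
  bar_one_e : bar 1 * e = 1
  bar_bar : ∀ a : R, bar (bar a) = a
  bar_mul : ∀ a b : R, bar (a * b) = bar b * e * bar a

/-- An anti-Hermitian form on a right `R`-module `V` (a right module is encoded as a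
module over the opposite ring, so `u·a` is `op a • u`). -/
structure AntiHermitianForm (R : Type*) [Ring R] (pi : PseudoInvolution R)
    (V : Type*) [AddCommGroup V] [Module Rᵐᵒᵖ V] where
  B : V → V → R
  add_left : ∀ u v w : V, B (u + v) w = B u w + B v w
  add_right : ∀ u v w : V, B u (v + w) = B u v + B u w
  smul_pair : ∀ (a b : R) (u v : V), B (op a • u) (op b • v) = pi.bar a * pi.e * B u v * b
  skew : ∀ u v : V, B u v = - pi.bar (B v u)

variable {R : Type u} [Ring R] {pi : PseudoInvolution R}
variable {V : Type u} [AddCommGroup V] [Module Rᵐᵒᵖ V]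

/-- The Heisenberg group operation `(u,a) ∔ (v,b) = (u+v, a+b+B(u,v))`. -/
def hAdd (f : AntiHermitianForm R pi V) (x y : V × R) : V × R :=
  (x.1 + y.1, x.2 + y.2 + f.B x.1 y.1)

/-- The Heisenberg group inverse `∸(u,a) = (−u, −a+B(u,u))`. -/
def hInv (f : AntiHermitianForm R pi V) (x : V × R) : V × R :=
  (-x.1, -x.2 + f.B x.1 x.1)

/-- The right action of `R` on the Heisenberg group, `(u,a) ↼ b = (ub, b̄·1̄⁻¹·a·b)`. -/
def hAct (pi : PseudoInvolution R) (x : V × R) (b : R) : V × R :=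
  (op b • x.1, pi.bar b * pi.e * x.2 * b)

/-- An odd form parameter: a subgroup of the Heisenberg group, stable under the
`R`-action, lying between `𝔏_min` and `𝔏_max`. -/
structure OddFormParameter (f : AntiHermitianForm R pi V) where
  carrier : Set (V × R)
  add_mem : ∀ x y : V × R, x ∈ carrier → y ∈ carrier → hAdd f x y ∈ carrier
  inv_mem : ∀ x : V × R, x ∈ carrier → hInv f x ∈ carrier
  act_mem : ∀ x : V × R, x ∈ carrier → ∀ b : R, hAct pi x b ∈ carrier
  min_le : ∀ a : R, ((0 : V), a + pi.bar a) ∈ carrier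
  le_max : ∀ x : V × R, x ∈ carrier → x.2 = pi.bar x.2 + f.B x.1 x.1

/-- The index set `Ω = {1,…,n,−n,…,−1}` (for `n = ∞` all nonzero integers). -/
def Omega (n : ℕ∞) : Set ℤ := {i : ℤ | i ≠ 0 ∧ (i.natAbs : ℕ∞) ≤ n}

/-- `ε_i = 1̄⁻¹` for `i > 0` and `ε_i = −1` for `i < 0`. -/
def epsI (pi : PseudoInvolution R) (i : ℤ) : R := if 0 < i then pi.e else -1

/-- A family of "Steinberg generators" in a group `G` satisfying Petrov's relations
R0–R9 of the odd unitary Steinberg group `StU(2n, R, 𝔏)`. -/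
structure StURels (n : ℕ∞) (f : AntiHermitianForm R pi V) (L : OddFormParameter f)
    (G : Type*) [Group G] where
  X : ℤ → ℤ → R → G
  Y : ℤ → V × R → G
  rel0 : ∀ i j : ℤ, i ∈ Omega n → j ∈ Omega n → j ≠ i → j ≠ -i → ∀ a : R,
    X i j a = X (-j) (-i) (epsI pi (-j) * pi.bar a * epsI pi i)
  rel1 : ∀ i j : ℤ, i ∈ Omega n → j ∈ Omega n → j ≠ i → j ≠ -i → ∀ a b : R,
    X i j a * X i j b = X i j (a + b)
  rel2 : ∀ i : ℤ, i ∈ Omega n → ∀ ξ ζ : V × R, ξ ∈ L.carrier → ζ ∈ L.carrier →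
    Y i ξ * Y i ζ = Y i (hAdd f ξ ζ)
  rel3 : ∀ i j h k : ℤ, i ∈ Omega n → j ∈ Omega n → h ∈ Omega n → k ∈ Omega n →
    j ≠ i → j ≠ -i → k ≠ h → k ≠ -h → h ≠ j → h ≠ -i → k ≠ i → k ≠ -j →
    ∀ a b : R, ⁅X i j a, X h k b⁆ = 1
  rel4 : ∀ i j k : ℤ, i ∈ Omega n → j ∈ Omega n → k ∈ Omega n → k ≠ j → k ≠ -j →
    j ≠ -i → k ≠ i → ∀ ξ : V × R, ξ ∈ L.carrier → ∀ a : R, ⁅Y i ξ, X j k a⁆ = 1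
  rel5 : ∀ i j k : ℤ, i ∈ Omega n → j ∈ Omega n → k ∈ Omega n →
    j ≠ i → j ≠ -i → k ≠ j → k ≠ -j → k ≠ i → k ≠ -i →
    ∀ a b : R, ⁅X i j a, X j k b⁆ = X i k (a * b)
  rel6 : ∀ i j : ℤ, i ∈ Omega n → j ∈ Omega n → j ≠ i → j ≠ -i →
    ∀ (u : V) (a : R) (v : V) (b : R), (u, a) ∈ L.carrier → (v, b) ∈ L.carrier →
    ⁅Y i (u, a), Y j (v, b)⁆ = X i (-j) (epsI pi i * f.B u v)
  rel7 : ∀ i : ℤ, i ∈ Omega n →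
    ∀ (u : V) (a : R) (v : V) (b : R), (u, a) ∈ L.carrier → (v, b) ∈ L.carrier →
    ⁅Y i (u, a), Y i (v, b)⁆ = Y i (0, f.B u v - f.B v u)
  rel8 : ∀ i j : ℤ, i ∈ Omega n → j ∈ Omega n → j ≠ i → j ≠ -i →
    ∀ (u : V) (a : R), (u, a) ∈ L.carrier → ∀ b : R,
    ⁅Y i (u, a), X (-i) j b⁆ = X i j (epsI pi i * a * b) * Y (-j) (hAct pi (u, -pi.bar a) b)
  rel9 : ∀ i j : ℤ, i ∈ Omega n → j ∈ Omega n → j ≠ i → j ≠ -i → ∀ a b : R,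
    ⁅X i j a, X j (-i) b⁆ =
      Y i (0, -(epsI pi (-i)) * pi.bar 1 * a * b + pi.bar b * pi.e * pi.bar a * epsI pi i)

/-- `(G, S)` *is* the odd unitary Steinberg group `StU(2n, R, 𝔏)`: it has the universal
property of the presentation, i.e. for every group `H` with Steinberg generators
satisfying R0–R9 there is a unique homomorphism `G →* H` matching the generators. -/
def IsStU {n : ℕ∞} {f : AntiHermitianForm R pi V} {L : OddFormParameter f}
    {G : Type u} [Group G] (S : StURels n f L G) : Prop :=
  ∀ (H : Type u) [Group H], ∀ T : StURels n f L H,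
    ∃! φ : G →* H,
      (∀ i j : ℤ, i ∈ Omega n → j ∈ Omega n → j ≠ i → j ≠ -i → ∀ a : R,
        φ (S.X i j a) = T.X i j a) ∧
      (∀ i : ℤ, i ∈ Omega n → ∀ ξ : V × R, ξ ∈ L.carrier → φ (S.Y i ξ) = T.Y i ξ)

noncomputable section
open scoped Classical
/-- The underlying module of the odd hyperbolic unitary space `Hⁿ ⊥ V`: a free part
with basis indexed by `Ω` together with `V`. -/
abbrev Wm (n : ℕ) (R : Type u) [Ring R] (V : Type u) [AddCommGroup V]
    [Module Rᵐᵒᵖ V] : Type u :=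
  ({i : ℤ // i ∈ Omega (n : ℕ∞)} × Unit → R) × V

/-- The `k`-th coefficient of a vector of the free part (0 for invalid indices). -/
def cf {n : ℕ} (x : {i : ℤ // i ∈ Omega (n : ℕ∞)} × Unit → R) (k : ℤ) : R :=
  if h : k ∈ Omega (n : ℕ∞) then x (⟨k, h⟩, ()) else 0

/-- The hyperbolic basis vector `e_k`. -/
def ebas (n : ℕ) (R : Type u) [Ring R] (V : Type u) [AddCommGroup V] [Module Rᵐᵒᵖ V]
    (k : ℤ) : Wm n R V :=
  (fun j => if (j.1 : ℤ) = k then 1 else 0, 0)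

/-- The embedding of `V` into `Hⁿ ⊥ V`. -/
def embV (n : ℕ) (R : Type u) [Ring R] {V : Type u} [AddCommGroup V] [Module Rᵐᵒᵖ V]
    (u : V) : Wm n R V := (0, u)

/-- The anti-Hermitian form of the odd hyperbolic unitary space `Hⁿ ⊥ V`:
`B(eᵢ, e₋ᵢ) = 1`, `B(e₋ᵢ, eᵢ) = −1̄` for `i > 0`, the hyperbolic part is orthogonal
to `V`, and the form restricts to `B` on `V`. -/
def BW (n : ℕ) (f : AntiHermitianForm R pi V) (w w' : Wm n R V) : R :=
  (∑ i ∈ Finset.Icc (1 : ℤ) (n : ℤ),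
    (pi.bar (cf w.1 i) * pi.e * cf w'.1 (-i)
      - pi.bar (cf w.1 (-i)) * pi.e * pi.bar 1 * cf w'.1 i)) + f.B w.2 w'.2

/-- The odd form parameter of the odd hyperbolic unitary space `Hⁿ ⊥ V`. -/
def LW (n : ℕ) (f : AntiHermitianForm R pi V) (L : OddFormParameter f) :
    Set (Wm n R V × R) :=
  {x | ∃ c a : R, (x.1.2, a) ∈ L.carrier ∧
    x.2 = (∑ i ∈ Finset.Icc (1 : ℤ) (n : ℤ),
      pi.bar (cf x.1.1 i) * pi.e * cf x.1.1 (-i)) + c + pi.bar c + a}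

/-- The elementary transvection `T_ij(a)` as a map,
`w ↦ w + e₋ⱼ·ε₋ⱼ·ā·1̄⁻¹·B(eᵢ,w) − eᵢ·a·εⱼ·B(e₋ⱼ,w)`. -/
def TijFun (n : ℕ) (f : AntiHermitianForm R pi V) (i j : ℤ) (a : R)
    (w : Wm n R V) : Wm n R V :=
  w + op (epsI pi (-j) * pi.bar a * pi.e * BW n f (ebas n R V i) w) • ebas n R V (-j)
    - op (a * epsI pi j * BW n f (ebas n R V (-j)) w) • ebas n R V i

/-- The elementary transvection `T_i(u,b)` as a map,
`w ↦ w − eᵢ·εᵢ·B(u,w) − eᵢ·εᵢ·b·ε₋ᵢ·B(eᵢ,w) + u·ε₋ᵢ·B(eᵢ,w)`. -/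
def TiFun (n : ℕ) (f : AntiHermitianForm R pi V) (i : ℤ) (u : V) (b : R)
    (w : Wm n R V) : Wm n R V :=
  w - op (epsI pi i * BW n f (embV n R u) w) • ebas n R V i
    - op (epsI pi i * b * epsI pi (-i) * BW n f (ebas n R V i) w) • ebas n R V i
    + op (epsI pi (-i) * BW n f (ebas n R V i) w) • embV n R u

/-- Membership in the odd hyperbolic unitary group `U(2n, R, 𝔏)`: a bijective
isometry (linear over the ″right″ ring action) that is equivalent to the identity
modulo the form parameter. -/
def IsUnitary (n : ℕ) (f : AntiHermitianForm R pi V) (L : OddFormParameter f)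
    (g : Wm n R V ≃ₗ[Rᵐᵒᵖ] Wm n R V) : Prop :=
  (∀ w w' : Wm n R V, BW n f (g w) (g w') = BW n f w w') ∧
  (∀ w : Wm n R V, (g w - w, BW n f (w - g w) w) ∈ LW n f L)

/-- The indices `1, …, n−1, −(n−1), …, −1` of `Ω ∖ {±n}`, in the order used in the
canonical decomposition of elements of `U₁`. -/
def idxList (n : ℕ) : List ℤ :=
  ((List.range (n - 1)).map fun k => (k + 1 : ℤ)) ++
    ((List.range (n - 1)).map fun k => -((n : ℤ) - 1 - k))

/-- The subgroup `ᵚᵗᵘU₁(2n, R, 𝔏)` of the Steinberg group, generated by the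
`X_{n,i}(a)` and the `X_n(ζ)`. -/
def U1 {n : ℕ} {f : AntiHermitianForm R pi V} {L : OddFormParameter f}
    {G : Type u} [Group G] (S : StURels (n : ℕ∞) f L G) : Subgroup G :=
  Subgroup.closure
    ({g : G | ∃ i : ℤ, (i ∈ Omega (n : ℕ∞) ∧ i ≠ (n : ℤ) ∧ i ≠ -(n : ℤ)) ∧
        ∃ a : R, g = S.X (n : ℤ) i a} ∪
     {g : G | ∃ ξ ∈ L.carrier, g = S.Y (n : ℤ) ξ})


/-! ### Auxiliary lemmas -/

section Aux

lemma bar_zero (pi : PseudoInvolution R) : pi.bar 0 = 0 := by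
  have h := pi.bar_add 0 0
  rw [add_zero] at h
  exact (left_eq_add.mp h)

lemma bar_inj (pi : PseudoInvolution R) {a b : R} (h : pi.bar a = pi.bar b) : a = b := by
  have := congrArg pi.bar h
  rwa [pi.bar_bar, pi.bar_bar] at this

lemma e_cancel_right {pi : PseudoInvolution R} {x y : R} (h : x * pi.e = y * pi.e) : x = y := by
  have := congrArg (· * pi.bar 1) h
  simpa [mul_assoc, pi.e_bar_one] using this

lemma e_cancel_left {pi : PseudoInvolution R} {x y : R} (h : pi.e * x = pi.e * y) : x = y := by
  have := congrArg (pi.bar 1 * ·) h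
  simpa [← mul_assoc, pi.bar_one_e] using this

lemma eps_cancel_left {pi : PseudoInvolution R} (i : ℤ) {x y : R}
    (h : epsI pi i * x = epsI pi i * y) : x = y := by
  unfold epsI at h
  split_ifs at h
  · exact e_cancel_left h
  · simpa using congrArg (fun z => -z) h

lemma eps_cancel_right {pi : PseudoInvolution R} (i : ℤ) {x y : R}
    (h : x * epsI pi i = y * epsI pi i) : x = y := by
  unfold epsI at h
  split_ifs at h
  · exact e_cancel_right h
  · simpa using congrArg (fun z => -z) h

lemma B_zero_left (f : AntiHermitianForm R pi V) (v : V) : f.B 0 v = 0 := by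
  have h := f.add_left 0 0 v
  rw [add_zero] at h
  exact (left_eq_add.mp h)

lemma B_zero_right (f : AntiHermitianForm R pi V) (v : V) : f.B v 0 = 0 := by
  have h := f.add_right v 0 0
  rw [add_zero] at h
  exact (left_eq_add.mp h)

lemma B_neg_right (f : AntiHermitianForm R pi V) (u v : V) : f.B u (-v) = - f.B u v := by
  have h := f.add_right u (-v) v
  rw [neg_add_cancel, B_zero_right] at h
  exact eq_neg_of_add_eq_zero_left h.symm

lemma B_neg_left (f : AntiHermitianForm R pi V) (u v : V) : f.B (-u) v = - f.B u v := by
  have h := f.add_left (-u) u v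
  rw [neg_add_cancel, B_zero_left] at h
  exact eq_neg_of_add_eq_zero_left h.symm

lemma mem00 {f : AntiHermitianForm R pi V} (L : OddFormParameter f) :
    ((0 : V), (0 : R)) ∈ L.carrier := by
  have h := L.min_le 0
  simpa [bar_zero] using h

lemma epsI_pos {pi : PseudoInvolution R} {i : ℤ} (h : 0 < i) : epsI pi i = pi.e := if_pos h

lemma epsI_neg {pi : PseudoInvolution R} {i : ℤ} (h : i < 0) : epsI pi i = -1 :=
  if_neg (by omega)

lemma mem_Omega_iff {n : ℕ} {k : ℤ} :
    k ∈ Omega (n : ℕ∞) ↔ k ≠ 0 ∧ k.natAbs ≤ n := by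
  unfold Omega
  simp [Nat.cast_le]

lemma idxList_eq (n : ℕ) : idxList n =
    ((List.range (n - 1)).map fun m : ℕ => ((m : ℤ) + 1)) ++
      ((List.range (n - 1)).map fun m : ℕ => -((n : ℤ) - 1 - (m : ℤ))) := by
  unfold idxList
  rw [show (do let a ← List.range (n-1); pure ((a:ℤ)))
      = (List.range (n-1)).map (Nat.cast : ℕ → ℤ) from by simp [List.map_eq_flatMap]]
  simp [List.map_map, Function.comp_def]

lemma mem_idxList_iff {n : ℕ} (hn : 3 ≤ n) {k : ℤ} :
    k ∈ idxList n ↔ (k ∈ Omega (n : ℕ∞) ∧ k ≠ (n : ℤ) ∧ k ≠ -(n : ℤ)) := by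
  rw [mem_Omega_iff, idxList_eq, List.mem_append]
  constructor
  · rintro (h | h) <;>
    · obtain ⟨m, hm, rfl⟩ := List.mem_map.mp h
      have := List.mem_range.mp hm
      refine ⟨⟨by omega, by omega⟩, by omega, by omega⟩
  · rintro ⟨⟨h0, habs⟩, hne1, hne2⟩
    rcases lt_or_gt_of_ne h0 with h | h
    · right
      exact List.mem_map.mpr ⟨((n:ℤ) - 1 + k).toNat, List.mem_range.mpr (by omega), by omega⟩
    · left
      exact List.mem_map.mpr ⟨(k - 1).toNat, List.mem_range.mpr (by omega), by omega⟩

lemma idxList_nodup {n : ℕ} : (idxList n).Nodup := by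
  rw [idxList_eq]
  refine List.Nodup.append ?_ ?_ ?_
  · exact List.Nodup.map (fun a b h => by omega) List.nodup_range
  · exact List.Nodup.map (fun a b h => by omega) List.nodup_range
  · intro x hx hy
    simp only [List.mem_map, List.mem_range] at hx hy
    obtain ⟨a, ha, rfl⟩ := hx
    obtain ⟨b, hb, hab⟩ := hy
    omega

lemma n_mem_Omega {n : ℕ} (hn : 3 ≤ n) : ((n : ℤ)) ∈ Omega (n : ℕ∞) := by
  rw [mem_Omega_iff]; omega

lemma negn_mem_Omega {n : ℕ} (hn : 3 ≤ n) : (-(n : ℤ)) ∈ Omega (n : ℕ∞) := by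
  rw [mem_Omega_iff]
  constructor
  · omega
  · simp [Int.natAbs_neg]

lemma neg_mem_Omega {n : ℕ} {k : ℤ} (h : k ∈ Omega (n : ℕ∞)) : -k ∈ Omega (n : ℕ∞) := by
  rw [mem_Omega_iff] at h ⊢
  simpa [Int.natAbs_neg] using h

end Aux


section GroupAux

/-- `k` is a valid "short root" index: in `Ω` and distinct from `±n`. -/
def good (n : ℕ) (k : ℤ) : Prop :=
  k ∈ Omega (n : ℕ∞) ∧ k ≠ (n : ℤ) ∧ k ≠ -(n : ℤ)

variable {n : ℕ} {f : AntiHermitianForm R pi V} {L : OddFormParameter f}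
variable {G : Type u} [Group G] (S : StURels (n : ℕ∞) f L G)

lemma mul_eq_comm_aux {G : Type*} [Group G] (g h : G) : g * h = ⁅g, h⁆ * (h * g) := by
  rw [commutatorElement_def]; group

lemma X_zero (hn : 3 ≤ n) {k : ℤ} (hk : good n k) : S.X (n : ℤ) k 0 = 1 := by
  have h := S.rel1 (n : ℤ) k (n_mem_Omega hn) hk.1 hk.2.1 hk.2.2 0 0
  rw [add_zero] at h
  exact mul_left_cancel (h.trans (mul_one _).symm)

lemma X_inv (hn : 3 ≤ n) {k : ℤ} (hk : good n k) (a : R) :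
    (S.X (n : ℤ) k a)⁻¹ = S.X (n : ℤ) k (-a) := by
  apply inv_eq_of_mul_eq_one_left
  rw [S.rel1 (n : ℤ) k (n_mem_Omega hn) hk.1 hk.2.1 hk.2.2, neg_add_cancel,
    X_zero S hn hk]

lemma Y_eq_one (hn : 3 ≤ n) : S.Y (n : ℤ) ((0 : V), (0 : R)) = 1 := by
  have h := S.rel2 (n : ℤ) (n_mem_Omega hn) _ _ (mem00 L) (mem00 L)
  have h2 : hAdd f ((0 : V), (0 : R)) ((0 : V), (0 : R)) = ((0 : V), (0 : R)) := by
    simp [hAdd, B_zero_left]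
  rw [h2] at h
  exact mul_left_cancel (h.trans (mul_one _).symm)

lemma Y_inv (hn : 3 ≤ n) {ξ : V × R} (hξ : ξ ∈ L.carrier) :
    (S.Y (n : ℤ) ξ)⁻¹ = S.Y (n : ℤ) (hInv f ξ) := by
  apply inv_eq_of_mul_eq_one_left
  have h := S.rel2 (n : ℤ) (n_mem_Omega hn) _ _ (L.inv_mem _ hξ) hξ
  have h2 : hAdd f (hInv f ξ) ξ = ((0 : V), (0 : R)) := by
    unfold hAdd hInv
    refine Prod.ext (by simp) ?_
    simp only [B_neg_left]
    abel
  rw [h2] at h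
  rw [h, Y_eq_one S hn]

lemma Ymerge (hn : 3 ≤ n) {ξ ζ : V × R} (hξ : ξ ∈ L.carrier) (hζ : ζ ∈ L.carrier) :
    S.Y (n : ℤ) ξ * S.Y (n : ℤ) ζ = S.Y (n : ℤ) (hAdd f ξ ζ) :=
  S.rel2 (n : ℤ) (n_mem_Omega hn) _ _ hξ hζ

lemma YX_comm (hn : 3 ≤ n) {ζ : V × R} (hζ : ζ ∈ L.carrier) {k : ℤ} (hk : good n k)
    (a : R) : S.Y (n : ℤ) ζ * S.X (n : ℤ) k a = S.X (n : ℤ) k a * S.Y (n : ℤ) ζ := by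
  have h := S.rel4 (n : ℤ) (n : ℤ) k (n_mem_Omega hn) (n_mem_Omega hn) hk.1
    hk.2.1 hk.2.2 (by omega) hk.2.1 ζ hζ a
  exact commutatorElement_eq_one_iff_mul_comm.mp h

lemma pairSwap (hn : 3 ≤ n) {h k : ℤ} (hh : good n h) (hk : good n k) (c b : R) :
    ∃ ζ ∈ L.carrier, ζ.1 = 0 ∧
      S.X (n : ℤ) h c * S.X (n : ℤ) k b
        = S.Y (n : ℤ) ζ * (S.X (n : ℤ) k b * S.X (n : ℤ) h c) := by
  have hnΩ := n_mem_Omega hn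
  rcases eq_or_ne k h with rfl | hkh
  · refine ⟨((0 : V), (0 : R)), mem00 L, rfl, ?_⟩
    rw [Y_eq_one S hn, one_mul, S.rel1 _ _ hnΩ hh.1 hh.2.1 hh.2.2 c b,
      S.rel1 _ _ hnΩ hh.1 hh.2.1 hh.2.2 b c, add_comm]
  rcases eq_or_ne k (-h) with rfl | hknh
  · -- `k = -h` : use R0 and R9
    obtain ⟨d, hd⟩ : ∃ d : R, d = epsI pi (-(-h)) * pi.bar b * epsI pi (n : ℤ) :=
      ⟨_, rfl⟩
    have h0 : S.X (n : ℤ) (-h) b = S.X (-(-h)) (-(n : ℤ)) d := by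
      rw [hd]
      exact S.rel0 (n : ℤ) (-h) hnΩ (neg_mem_Omega hh.1)
        (fun hc => hh.2.2 (by omega)) (fun hc => hh.2.1 (by omega)) b
    rw [neg_neg] at h0
    have h9 := S.rel9 (n : ℤ) h hnΩ hh.1 hh.2.1 hh.2.2 c d
    obtain ⟨D2, hD2⟩ : ∃ D2 : R, D2 = -epsI pi (-(n : ℤ)) * pi.bar 1 * c * d
        + pi.bar d * pi.e * pi.bar c * epsI pi (n : ℤ) := ⟨_, rfl⟩
    rw [← hD2] at h9
    have hmem : ((0 : V), D2) ∈ L.carrier := by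
      have hx := L.min_le (pi.bar 1 * c * d)
      have hEq : D2 = pi.bar 1 * c * d + pi.bar (pi.bar 1 * c * d) := by
        rw [hD2, epsI_neg (by omega), epsI_pos (by omega : (0:ℤ) < (n : ℤ)),
          pi.bar_mul, pi.bar_mul, pi.bar_bar]
        noncomm_ring
      rw [hEq]
      exact hx
    refine ⟨((0 : V), D2), hmem, rfl, ?_⟩
    calc S.X (n : ℤ) h c * S.X (n : ℤ) (-h) b
        = S.X (n : ℤ) h c * S.X h (-(n : ℤ)) d := by rw [h0]
      _ = ⁅S.X (n : ℤ) h c, S.X h (-(n : ℤ)) d⁆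
            * (S.X h (-(n : ℤ)) d * S.X (n : ℤ) h c) := mul_eq_comm_aux _ _
      _ = S.Y (n : ℤ) ((0 : V), D2)
            * (S.X (n : ℤ) (-h) b * S.X (n : ℤ) h c) := by rw [h9, ← h0]
  · refine ⟨((0 : V), (0 : R)), mem00 L, rfl, ?_⟩
    rw [Y_eq_one S hn, one_mul]
    exact commutatorElement_eq_one_iff_mul_comm.mp
      (S.rel3 (n : ℤ) h (n : ℤ) k hnΩ hh.1 hnΩ hk.1 hh.2.1 hh.2.2 hk.2.1 hk.2.2
        (fun hhh => hh.2.1 hhh.symm) (by omega) hk.2.1 (fun hc => hknh (by omega)) c b)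

lemma Pl_congr {l : List ℤ} {a a' : ℤ → R} (hmem : ∀ i ∈ l, a i = a' i) :
    (l.map fun i => S.X (n : ℤ) i (a i)).prod
      = (l.map fun i => S.X (n : ℤ) i (a' i)).prod := by
  congr 1
  exact List.map_congr_left fun i hi => by rw [hmem i hi]

lemma Pl_one (hn : 3 ≤ n) {l : List ℤ} (hl : ∀ i ∈ l, good n i) {a : ℤ → R}
    (ha : ∀ i ∈ l, a i = 0) : (l.map fun i => S.X (n : ℤ) i (a i)).prod = 1 := by
  apply List.prod_eq_one
  rintro x hx
  obtain ⟨i, hi, rfl⟩ := List.mem_map.mp hx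
  rw [ha i hi, X_zero S hn (hl i hi)]

lemma YP_comm (hn : 3 ≤ n) {ζ : V × R} (hζ : ζ ∈ L.carrier) {l : List ℤ}
    (hl : ∀ i ∈ l, good n i) (a : ℤ → R) :
    S.Y (n : ℤ) ζ * (l.map fun i => S.X (n : ℤ) i (a i)).prod
      = (l.map fun i => S.X (n : ℤ) i (a i)).prod * S.Y (n : ℤ) ζ := by
  induction l with
  | nil => simp
  | cons h t ih =>
    simp only [List.map_cons, List.prod_cons]
    rw [← mul_assoc, YX_comm S hn hζ (hl h (by simp)) (a h), mul_assoc,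
      ih (fun i hi => hl i (by simp [hi])), ← mul_assoc]

lemma moveRight (hn : 3 ≤ n) {l : List ℤ} (hl : ∀ i ∈ l, good n i) {k : ℤ}
    (hk : good n k) (a : ℤ → R) (b : R) :
    ∃ ζ ∈ L.carrier, ζ.1 = 0 ∧
      (l.map fun i => S.X (n : ℤ) i (a i)).prod * S.X (n : ℤ) k b
        = S.Y (n : ℤ) ζ
          * (S.X (n : ℤ) k b * (l.map fun i => S.X (n : ℤ) i (a i)).prod) := by
  induction l with
  | nil =>
    refine ⟨((0 : V), (0 : R)), mem00 L, rfl, ?_⟩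
    simp only [List.map_nil, List.prod_nil, one_mul, mul_one]
    rw [Y_eq_one S hn, one_mul]
  | cons h t ih =>
    obtain ⟨ζ₁, hζ₁, hz1, hswap1⟩ := ih (fun i hi => hl i (by simp [hi]))
    obtain ⟨ζ₂, hζ₂, hz2, hswap2⟩ := pairSwap S hn (hl h (by simp)) hk (a h) b
    refine ⟨hAdd f ζ₁ ζ₂, L.add_mem _ _ hζ₁ hζ₂, by simp [hAdd, hz1, hz2], ?_⟩
    simp only [List.map_cons, List.prod_cons]
    calc S.X (n : ℤ) h (a h) * (t.map fun i => S.X (n : ℤ) i (a i)).prod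
          * S.X (n : ℤ) k b
        = S.X (n : ℤ) h (a h)
            * ((t.map fun i => S.X (n : ℤ) i (a i)).prod * S.X (n : ℤ) k b) := by
          simp only [mul_assoc]
      _ = S.X (n : ℤ) h (a h) * (S.Y (n : ℤ) ζ₁
            * (S.X (n : ℤ) k b * (t.map fun i => S.X (n : ℤ) i (a i)).prod)) := by
          rw [hswap1]
      _ = (S.X (n : ℤ) h (a h) * S.Y (n : ℤ) ζ₁)
            * (S.X (n : ℤ) k b * (t.map fun i => S.X (n : ℤ) i (a i)).prod) := by
          simp only [mul_assoc]
      _ = (S.Y (n : ℤ) ζ₁ * S.X (n : ℤ) h (a h))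
            * (S.X (n : ℤ) k b * (t.map fun i => S.X (n : ℤ) i (a i)).prod) := by
          rw [YX_comm S hn hζ₁ (hl h (by simp)) (a h)]
      _ = S.Y (n : ℤ) ζ₁ * ((S.X (n : ℤ) h (a h) * S.X (n : ℤ) k b)
            * (t.map fun i => S.X (n : ℤ) i (a i)).prod) := by
          simp only [mul_assoc]
      _ = S.Y (n : ℤ) ζ₁ * ((S.Y (n : ℤ) ζ₂
            * (S.X (n : ℤ) k b * S.X (n : ℤ) h (a h)))
            * (t.map fun i => S.X (n : ℤ) i (a i)).prod) := by
          rw [hswap2]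
      _ = (S.Y (n : ℤ) ζ₁ * S.Y (n : ℤ) ζ₂) * (S.X (n : ℤ) k b
            * (S.X (n : ℤ) h (a h) * (t.map fun i => S.X (n : ℤ) i (a i)).prod)) := by
          simp only [mul_assoc]
      _ = S.Y (n : ℤ) (hAdd f ζ₁ ζ₂) * (S.X (n : ℤ) k b
            * (S.X (n : ℤ) h (a h) * (t.map fun i => S.X (n : ℤ) i (a i)).prod)) := by
          rw [Ymerge S hn hζ₁ hζ₂]

lemma mergeLeft (hn : 3 ≤ n) {l : List ℤ} (hl : ∀ i ∈ l, good n i) (hnd : l.Nodup)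
    {k : ℤ} (hk : k ∈ l) (a : ℤ → R) (b : R) :
    ∃ ζ ∈ L.carrier, ζ.1 = 0 ∧
      S.X (n : ℤ) k b * (l.map fun i => S.X (n : ℤ) i (a i)).prod
        = S.Y (n : ℤ) ζ
          * (l.map fun i =>
              S.X (n : ℤ) i (Function.update a k (b + a k) i)).prod := by
  induction l with
  | nil => simp at hk
  | cons h t ih =>
    simp only [List.map_cons, List.prod_cons]
    rcases eq_or_ne k h with rfl | hkh
    · have hknt : k ∉ t := (List.nodup_cons.mp hnd).1
      refine ⟨((0 : V), (0 : R)), mem00 L, rfl, ?_⟩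
      have hgk := hl k (by simp)
      rw [Y_eq_one S hn, one_mul, ← mul_assoc,
        S.rel1 _ _ (n_mem_Omega hn) hgk.1 hgk.2.1 hgk.2.2 b (a k),
        Function.update_self]
      congr 1
      exact Pl_congr S fun i hi =>
        (Function.update_of_ne (by rintro rfl; exact hknt hi) _ _).symm
    · have hkt : k ∈ t := by
        rcases List.mem_cons.mp hk with h' | h'
        · exact absurd h' hkh
        · exact h'
      obtain ⟨ζ₃, hζ₃, hz3, hm⟩ :=
        ih (fun i hi => hl i (by simp [hi])) (List.nodup_cons.mp hnd).2 hkt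
      obtain ⟨ζ₂, hζ₂, hz2, hswap⟩ := pairSwap S hn (hl k (by simp [hkt]))
        (hl h (by simp)) b (a h)
      refine ⟨hAdd f ζ₂ ζ₃, L.add_mem _ _ hζ₂ hζ₃, by simp [hAdd, hz2, hz3], ?_⟩
      have hup : Function.update a k (b + a k) h = a h :=
        Function.update_of_ne (Ne.symm hkh) _ _
      rw [hup]
      calc S.X (n : ℤ) k b * (S.X (n : ℤ) h (a h)
            * (t.map fun i => S.X (n : ℤ) i (a i)).prod)
          = (S.X (n : ℤ) k b * S.X (n : ℤ) h (a h))
              * (t.map fun i => S.X (n : ℤ) i (a i)).prod := by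
            simp only [mul_assoc]
        _ = (S.Y (n : ℤ) ζ₂ * (S.X (n : ℤ) h (a h) * S.X (n : ℤ) k b))
              * (t.map fun i => S.X (n : ℤ) i (a i)).prod := by rw [hswap]
        _ = S.Y (n : ℤ) ζ₂ * (S.X (n : ℤ) h (a h)
              * (S.X (n : ℤ) k b * (t.map fun i => S.X (n : ℤ) i (a i)).prod)) := by
            simp only [mul_assoc]
        _ = S.Y (n : ℤ) ζ₂ * (S.X (n : ℤ) h (a h) * (S.Y (n : ℤ) ζ₃
              * (t.map fun i =>
                  S.X (n : ℤ) i (Function.update a k (b + a k) i)).prod)) := by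
            rw [hm]
        _ = S.Y (n : ℤ) ζ₂ * ((S.X (n : ℤ) h (a h) * S.Y (n : ℤ) ζ₃)
              * (t.map fun i =>
                  S.X (n : ℤ) i (Function.update a k (b + a k) i)).prod) := by
            simp only [mul_assoc]
        _ = S.Y (n : ℤ) ζ₂ * ((S.Y (n : ℤ) ζ₃ * S.X (n : ℤ) h (a h))
              * (t.map fun i =>
                  S.X (n : ℤ) i (Function.update a k (b + a k) i)).prod) := by
            rw [YX_comm S hn hζ₃ (hl h (by simp)) (a h)]
        _ = (S.Y (n : ℤ) ζ₂ * S.Y (n : ℤ) ζ₃) * (S.X (n : ℤ) h (a h)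
              * (t.map fun i =>
                  S.X (n : ℤ) i (Function.update a k (b + a k) i)).prod) := by
            simp only [mul_assoc]
        _ = S.Y (n : ℤ) (hAdd f ζ₂ ζ₃) * (S.X (n : ℤ) h (a h)
              * (t.map fun i =>
                  S.X (n : ℤ) i (Function.update a k (b + a k) i)).prod) := by
            rw [Ymerge S hn hζ₂ hζ₃]

/-- Normal-form predicate for elements of `U₁`. -/
def NFP {n : ℕ} {f : AntiHermitianForm R pi V} {L : OddFormParameter f}
    {G : Type u} [Group G] (S : StURels (n : ℕ∞) f L G) (x : G) : Prop :=
  ∃ (ξ : V × R) (a : ℤ → R), ξ ∈ L.carrier ∧ (∀ i ∉ idxList n, a i = 0) ∧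
    x = S.Y (n : ℤ) ξ * ((idxList n).map fun i => S.X (n : ℤ) i (a i)).prod

lemma RMX (hn : 3 ≤ n) {x : G} (hx : NFP S x) {k : ℤ} (hk : good n k) (b : R) :
    NFP S (x * S.X (n : ℤ) k b) := by
  obtain ⟨ξ, a, hξ, ha, rfl⟩ := hx
  have hli : ∀ i ∈ idxList n, good n i := fun i hi => (mem_idxList_iff hn).mp hi
  have hkl : k ∈ idxList n := (mem_idxList_iff hn).mpr hk
  obtain ⟨ζ, hζ, hz, h1⟩ := moveRight S hn hli hk a b
  obtain ⟨ζ', hζ', hz', h2⟩ := mergeLeft S hn hli idxList_nodup hkl a b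
  refine ⟨hAdd f ξ (hAdd f ζ ζ'), Function.update a k (b + a k),
    L.add_mem _ _ hξ (L.add_mem _ _ hζ hζ'), ?_, ?_⟩
  · intro i hi
    rw [Function.update_of_ne (by rintro rfl; exact hi hkl), ha i hi]
  · calc S.Y (n : ℤ) ξ * ((idxList n).map fun i => S.X (n : ℤ) i (a i)).prod
        * S.X (n : ℤ) k b
        = S.Y (n : ℤ) ξ * (((idxList n).map fun i => S.X (n : ℤ) i (a i)).prod
            * S.X (n : ℤ) k b) := by simp only [mul_assoc]
      _ = S.Y (n : ℤ) ξ * (S.Y (n : ℤ) ζ * (S.X (n : ℤ) k b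
            * ((idxList n).map fun i => S.X (n : ℤ) i (a i)).prod)) := by rw [h1]
      _ = S.Y (n : ℤ) ξ * (S.Y (n : ℤ) ζ * (S.Y (n : ℤ) ζ'
            * ((idxList n).map fun i =>
                S.X (n : ℤ) i (Function.update a k (b + a k) i)).prod)) := by
          rw [h2]
      _ = (S.Y (n : ℤ) ξ * (S.Y (n : ℤ) ζ * S.Y (n : ℤ) ζ'))
            * ((idxList n).map fun i =>
                S.X (n : ℤ) i (Function.update a k (b + a k) i)).prod := by
          simp only [mul_assoc]
      _ = S.Y (n : ℤ) (hAdd f ξ (hAdd f ζ ζ'))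
            * ((idxList n).map fun i =>
                S.X (n : ℤ) i (Function.update a k (b + a k) i)).prod := by
          rw [Ymerge S hn hζ hζ', Ymerge S hn hξ (L.add_mem _ _ hζ hζ')]

lemma RMY (hn : 3 ≤ n) {x : G} (hx : NFP S x) {ζ : V × R} (hζ : ζ ∈ L.carrier) :
    NFP S (x * S.Y (n : ℤ) ζ) := by
  obtain ⟨ξ, a, hξ, ha, rfl⟩ := hx
  have hli : ∀ i ∈ idxList n, good n i := fun i hi => (mem_idxList_iff hn).mp hi
  refine ⟨hAdd f ξ ζ, a, L.add_mem _ _ hξ hζ, ha, ?_⟩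
  rw [mul_assoc, ← YP_comm S hn hζ hli a, ← mul_assoc, Ymerge S hn hξ hζ]

lemma exists_nf (hn : 3 ≤ n) {x : G} (hx : x ∈ U1 S) : NFP S x := by
  unfold U1 at hx
  induction hx using Subgroup.closure_induction_right with
  | one =>
    refine ⟨((0 : V), (0 : R)), fun _ => 0, mem00 L, fun _ _ => rfl, ?_⟩
    rw [Y_eq_one S hn,
      Pl_one S hn (fun i hi => (mem_idxList_iff hn).mp hi) (fun _ _ => rfl), one_mul]
  | mul_right x' hx' y hy ih =>
    rcases hy with hy | hy
    · obtain ⟨i, hgood, aa, rfl⟩ := hy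
      exact RMX S hn ih hgood aa
    · obtain ⟨ξ₀, hξ₀, rfl⟩ := hy
      exact RMY S hn ih hξ₀
  | mul_inv_cancel x' hx' y hy ih =>
    rcases hy with hy | hy
    · obtain ⟨i, hgood, aa, rfl⟩ := hy
      rw [X_inv S hn hgood]
      exact RMX S hn ih hgood (-aa)
    · obtain ⟨ξ₀, hξ₀, rfl⟩ := hy
      rw [Y_inv S hn hξ₀]
      exact RMY S hn ih (L.inv_mem _ hξ₀)

end GroupAux


section WmAux

variable {n : ℕ} {f : AntiHermitianForm R pi V}

/-- The `k`-th coordinate of a vector of `Hⁿ ⊥ V`, as an additive map. -/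
def crd (n : ℕ) (k : ℤ) : Wm n R V →+ R where
  toFun w := cf w.1 k
  map_zero' := by by_cases h : k ∈ Omega (n : ℕ∞) <;> simp [cf, h]
  map_add' x y := by by_cases h : k ∈ Omega (n : ℕ∞) <;> simp [cf, h]

lemma crd_apply (k : ℤ) (w : Wm n R V) : crd n k w = cf w.1 k := rfl

lemma crd_smul (k : ℤ) (r : R) (w : Wm n R V) :
    crd n k (op r • w) = crd n k w * r := by
  by_cases h : k ∈ Omega (n : ℕ∞) <;> simp [crd, cf, h, op_smul_eq_mul]

lemma crd_ebas {k : ℤ} (hk : k ∈ Omega (n : ℕ∞)) (j : ℤ) :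
    crd n k (ebas n R V j) = if k = j then 1 else 0 := by
  simp [crd, cf, ebas, hk]

lemma ebas_snd (j : ℤ) : (ebas n R V j).2 = 0 := rfl

lemma embV_fst (u : V) : (embV n R u).1 = 0 := rfl

lemma BW_embV (u : V) (w : Wm n R V) : BW n f (embV n R u) w = f.B u w.2 := by
  unfold BW
  rw [Finset.sum_eq_zero, zero_add]
  · rfl
  · intro i hi
    by_cases h1 : i ∈ Omega (n : ℕ∞) <;> by_cases h2 : -i ∈ Omega (n : ℕ∞) <;>
      simp [embV, cf, h1, h2, bar_zero]

lemma BW_ebas_pos {k : ℤ} (hk1 : 1 ≤ k) (hk2 : k ≤ (n : ℤ)) (w : Wm n R V) :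
    BW n f (ebas n R V k) w = cf w.1 (-k) := by
  have hkΩ : k ∈ Omega (n : ℕ∞) := mem_Omega_iff.mpr ⟨by omega, by omega⟩
  unfold BW
  rw [Finset.sum_eq_single k]
  · have h1 : cf (ebas n R V k).1 k = 1 := by simp [ebas, cf, hkΩ]
    have h2 : cf (ebas n R V k).1 (-k) = 0 := by
      by_cases h : -k ∈ Omega (n : ℕ∞) <;>
        simp [ebas, cf, h, show ¬(-k = k) by omega]
    rw [h1, h2, bar_zero, pi.bar_one_e, one_mul, zero_mul, zero_mul, zero_mul, sub_zero]
    show cf w.1 (-k) + f.B 0 w.2 = cf w.1 (-k)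
    rw [B_zero_left, add_zero]
  · intro i hi hik
    have him := Finset.mem_Icc.mp hi
    have hiΩ : i ∈ Omega (n : ℕ∞) := mem_Omega_iff.mpr ⟨by omega, by omega⟩
    have e1 : cf (ebas n R V k).1 i = 0 := by simp [ebas, cf, hiΩ, hik]
    have e2 : cf (ebas n R V k).1 (-i) = 0 := by
      by_cases h : -i ∈ Omega (n : ℕ∞) <;>
        simp [ebas, cf, h, show ¬(-i = k) by omega]
    rw [e1, e2, bar_zero]
    simp
  · intro hk
    exact absurd (Finset.mem_Icc.mpr ⟨hk1, hk2⟩) hk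

lemma BW_ebas_neg {k : ℤ} (hk1 : 1 ≤ k) (hk2 : k ≤ (n : ℤ)) (w : Wm n R V) :
    BW n f (ebas n R V (-k)) w = -(pi.bar 1 * cf w.1 k) := by
  have hkΩ : -k ∈ Omega (n : ℕ∞) := mem_Omega_iff.mpr ⟨by omega, by omega⟩
  unfold BW
  rw [Finset.sum_eq_single k]
  · have h1 : cf (ebas n R V (-k)).1 (-k) = 1 := by simp [ebas, cf, hkΩ]
    have h2 : cf (ebas n R V (-k)).1 k = 0 := by
      by_cases h : k ∈ Omega (n : ℕ∞) <;>
        simp [ebas, cf, h, show ¬(k = -k) by omega]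
    rw [h1, h2, bar_zero, zero_mul, zero_mul, zero_sub, pi.bar_one_e, one_mul]
    show -(pi.bar 1 * cf w.1 k) + f.B 0 w.2 = _
    rw [B_zero_left, add_zero]
  · intro i hi hik
    have him := Finset.mem_Icc.mp hi
    have e1 : cf (ebas n R V (-k)).1 i = 0 := by
      have hiΩ : i ∈ Omega (n : ℕ∞) := mem_Omega_iff.mpr ⟨by omega, by omega⟩
      simp [ebas, cf, hiΩ, show ¬(i = -k) by omega]
    have e2 : cf (ebas n R V (-k)).1 (-i) = 0 := by
      by_cases h : -i ∈ Omega (n : ℕ∞) <;>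
        simp [ebas, cf, h, show ¬(-i = -k) by omega]
    rw [e1, e2, bar_zero]
    simp
  · intro hk
    exact absurd (Finset.mem_Icc.mpr ⟨hk1, hk2⟩) hk

lemma crd_listsum_zero {m : ℤ} (hm : m ∈ Omega (n : ℕ∞)) {l : List ℤ} (c : ℤ → R)
    (hne : ∀ i ∈ l, m ≠ -i) :
    crd n m ((l.map fun i => op (c i) • ebas n R V (-i)).sum) = 0 := by
  induction l with
  | nil => simp
  | cons h t ih =>
    simp only [List.map_cons, List.sum_cons, map_add, crd_smul, crd_ebas hm]
    rw [if_neg (hne h (by simp)), zero_mul, zero_add,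
      ih (fun i hi => hne i (by simp [hi]))]

lemma crd_listsum_mem {k : ℤ} {l : List ℤ} (c : ℤ → R) (hnd : l.Nodup) (hk : k ∈ l)
    (hmΩ : -k ∈ Omega (n : ℕ∞)) :
    crd n (-k) ((l.map fun i => op (c i) • ebas n R V (-i)).sum) = c k := by
  induction l with
  | nil => simp at hk
  | cons h t ih =>
    simp only [List.map_cons, List.sum_cons, map_add, crd_smul, crd_ebas hmΩ]
    rcases eq_or_ne k h with rfl | hkh
    · rw [if_pos rfl, one_mul,
        crd_listsum_zero hmΩ c (fun i hi => by
          have : k ∉ t := (List.nodup_cons.mp hnd).1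
          rintro hc
          exact this (by rwa [show i = k by omega] at hi)), add_zero]
    · rw [if_neg (by omega), zero_mul, zero_add,
        ih (List.nodup_cons.mp hnd).2 (by
          rcases List.mem_cons.mp hk with h' | h'
          · exact absurd h' hkh
          · exact h')]

lemma snd_listsum (l : List ℤ) (c : ℤ → R) :
    ((l.map fun i => op (c i) • ebas n R V (-i)).sum).2 = 0 := by
  induction l with
  | nil => simp
  | cons h t ih =>
    simp only [List.map_cons, List.sum_cons, Prod.snd_add, ih, add_zero]
    show op (c h) • (ebas n R V (-h)).2 = 0
    rw [ebas_snd, smul_zero]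

end WmAux


section VecAux

variable {n : ℕ} {f : AntiHermitianForm R pi V} {L : OddFormParameter f}

lemma mul_apply_lin (g₁ g₂ : Wm n R V ≃ₗ[Rᵐᵒᵖ] Wm n R V) (w : Wm n R V) :
    (g₁ * g₂) w = g₁ (g₂ w) := rfl

lemma crd_embV (m : ℤ) (u : V) : crd n m (embV n R u) = 0 := by
  by_cases h : m ∈ Omega (n : ℕ∞) <;> simp [crd, cf, embV, h]

lemma VL (hn : 3 ≤ n) (T : StURels (n : ℕ∞) f L (Wm n R V ≃ₗ[Rᵐᵒᵖ] Wm n R V))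
    (hTX : ∀ i j : ℤ, i ∈ Omega (n : ℕ∞) → j ∈ Omega (n : ℕ∞) → j ≠ i → j ≠ -i →
      ∀ (a : R) (w : Wm n R V), T.X i j a w = TijFun n f i j a w)
    {l : List ℤ} (hl : ∀ i ∈ l, good n i) (a : ℤ → R) :
    ∃ s : R, ((l.map fun i => T.X (n : ℤ) i (a i)).prod) (ebas n R V (-(n : ℤ)))
      = ebas n R V (-(n : ℤ))
        + ((l.map fun i =>
            op (epsI pi (-i) * pi.bar (a i) * pi.e) • ebas n R V (-i)).sum)
        + op s • ebas n R V (n : ℤ) := by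
  induction l with
  | nil => exact ⟨0, by simp⟩
  | cons h t ih =>
    obtain ⟨s, hs⟩ := ih (fun i hi => hl i (by simp [hi]))
    have hgh := hl h (by simp)
    simp only [List.map_cons, List.prod_cons, List.sum_cons]
    rw [mul_apply_lin, hs, hTX (n : ℤ) h (n_mem_Omega hn) hgh.1 hgh.2.1 hgh.2.2]
    set E := ebas n R V (-(n : ℤ))
      + ((t.map fun i =>
          op (epsI pi (-i) * pi.bar (a i) * pi.e) • ebas n R V (-i)).sum)
      + op s • ebas n R V (n : ℤ) with hE
    unfold TijFun
    rw [BW_ebas_pos (k := (n : ℤ)) (by omega) (by omega)]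
    have hcf : cf E.1 (-(n : ℤ)) = 1 := by
      rw [← crd_apply, hE, map_add, map_add, crd_smul,
        crd_listsum_zero (negn_mem_Omega hn) _
          (fun i hi => by have := (hl i (by simp [hi])).2.1; omega),
        crd_ebas (negn_mem_Omega hn), crd_ebas (negn_mem_Omega hn),
        if_pos rfl, if_neg (by omega), zero_mul, add_zero, add_zero]
    rw [hcf, mul_one]
    refine ⟨s - (a h * epsI pi h * BW n f (ebas n R V (-h)) E), ?_⟩
    rw [MulOpposite.op_sub, sub_smul, hE]
    abel

lemma param_inj (hn : 3 ≤ n)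
    (T : StURels (n : ℕ∞) f L (Wm n R V ≃ₗ[Rᵐᵒᵖ] Wm n R V))
    (hTX : ∀ i j : ℤ, i ∈ Omega (n : ℕ∞) → j ∈ Omega (n : ℕ∞) → j ≠ i → j ≠ -i →
      ∀ (a : R) (w : Wm n R V), T.X i j a w = TijFun n f i j a w)
    (hTY : ∀ i : ℤ, i ∈ Omega (n : ℕ∞) → ∀ (u : V) (b : R), (u, b) ∈ L.carrier →
      ∀ w : Wm n R V, T.Y i (u, b) w = TiFun n f i u b w)
    {u u' : V} {b b' : R} (hub : (u, b) ∈ L.carrier) (hub' : (u', b') ∈ L.carrier)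
    {a a' : ℤ → R} (ha : ∀ i ∉ idxList n, a i = 0) (ha' : ∀ i ∉ idxList n, a' i = 0)
    (heq : T.Y (n : ℤ) (u, b) * ((idxList n).map fun i => T.X (n : ℤ) i (a i)).prod
      = T.Y (n : ℤ) (u', b')
          * ((idxList n).map fun i => T.X (n : ℤ) i (a' i)).prod) :
    u = u' ∧ b = b' ∧ a = a' := by
  have hli : ∀ i ∈ idxList n, good n i := fun i hi => (mem_idxList_iff hn).mp hi
  obtain ⟨s, hs⟩ := VL hn T hTX hli a
  obtain ⟨s', hs'⟩ := VL hn T hTX hli a'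
  have happ := congrArg (fun g : Wm n R V ≃ₗ[Rᵐᵒᵖ] Wm n R V =>
    g (ebas n R V (-(n : ℤ)))) heq
  simp only [mul_apply_lin] at happ
  rw [hs, hs'] at happ
  set E := ebas n R V (-(n : ℤ))
    + (((idxList n).map fun i =>
        op (epsI pi (-i) * pi.bar (a i) * pi.e) • ebas n R V (-i)).sum)
    + op s • ebas n R V (n : ℤ) with hE
  set E' := ebas n R V (-(n : ℤ))
    + (((idxList n).map fun i =>
        op (epsI pi (-i) * pi.bar (a' i) * pi.e) • ebas n R V (-i)).sum)
    + op s' • ebas n R V (n : ℤ) with hE'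
  rw [hTY (n : ℤ) (n_mem_Omega hn) u b hub, hTY (n : ℤ) (n_mem_Omega hn) u' b' hub']
    at happ
  unfold TiFun at happ
  have hBn : ∀ ww : Wm n R V, BW n f (ebas n R V (n : ℤ)) ww = cf ww.1 (-(n : ℤ)) :=
    fun ww => BW_ebas_pos (by omega) (by omega) ww
  have hsnd : ∀ (c : ℤ → R) (ss : R),
      (ebas n R V (-(n : ℤ))
        + (((idxList n).map fun i => op (c i) • ebas n R V (-i)).sum)
        + op ss • ebas n R V (n : ℤ)).2 = 0 := by
    intro c ss
    simp [Prod.snd_add, snd_listsum, ebas_snd]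
  have hcrdn : ∀ (c : ℤ → R) (ss : R),
      cf (ebas n R V (-(n : ℤ))
        + (((idxList n).map fun i => op (c i) • ebas n R V (-i)).sum)
        + op ss • ebas n R V (n : ℤ)).1 (-(n : ℤ)) = 1 := by
    intro c ss
    rw [← crd_apply, map_add, map_add, crd_smul,
      crd_listsum_zero (negn_mem_Omega hn) _
        (fun i hi => by have := (hli i hi).2.1; omega),
      crd_ebas (negn_mem_Omega hn), crd_ebas (negn_mem_Omega hn),
      if_pos rfl, if_neg (by omega), zero_mul, add_zero, add_zero]
  rw [BW_embV, BW_embV, hBn E, hBn E', hE, hE', hsnd, hsnd, hcrdn, hcrdn,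
    B_zero_right, B_zero_right] at happ
  rw [← hE, ← hE'] at happ
  simp only [mul_zero, mul_one, MulOpposite.op_zero, zero_smul, sub_zero,
    epsI_neg (show (-(n : ℤ)) < 0 by omega),
    epsI_pos (show (0 : ℤ) < (n : ℤ) by omega)] at happ
  -- `happ : E - op (pi.e * b * -1) • ebas n R V n + op (-1) • embV n R u = ...`
  -- extract the `V`-component
  have hu : u = u' := by
    have h2 := congrArg Prod.snd happ
    simp only [Prod.snd_add, Prod.snd_sub, hE, hE'] at h2
    simp only [Prod.smul_snd, ebas_snd, snd_listsum, smul_zero, Prod.snd_add,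
      show (embV n R u).2 = u from rfl, show (embV n R u').2 = u' from rfl,
      add_zero, zero_add, zero_sub, sub_zero] at h2
    have : (op (-1 : R) : Rᵐᵒᵖ) • u = (op (-1 : R) : Rᵐᵒᵖ) • u' := by
      simpa [hsnd] using h2
    have := congrArg (fun v => (op (-1 : R) : Rᵐᵒᵖ) • v) this
    simpa [smul_smul, show (op (-1:R) * op (-1:R) : Rᵐᵒᵖ) = 1 by
      simp [← MulOpposite.op_mul]] using this
  -- extract the coefficients
  have hak : ∀ k ∈ idxList n, a k = a' k := by
    intro k hk
    have hkg := hli k hk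
    have hnegk : -k ∈ Omega (n : ℕ∞) := neg_mem_Omega hkg.1
    have h3 := congrArg (crd n (-k)) happ
    simp only [hE, hE', map_add, map_sub] at h3
    simp only [crd_smul, crd_ebas hnegk, crd_embV,
      crd_listsum_mem _ idxList_nodup hk hnegk,
      if_neg (show ¬(-k = -(n : ℤ)) by have := hkg.2.1; omega),
      if_neg (show ¬(-k = (n : ℤ)) by have := hkg.2.2; omega),
      zero_mul, add_zero, zero_add, mul_zero, sub_zero] at h3
    -- h3 : epsI pi (-k) * pi.bar (a k) * pi.e = epsI pi (-k) * pi.bar (a' k) * pi.e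
    have h4 := e_cancel_right h3
    have h5 := eps_cancel_left (pi := pi) (-k) h4
    exact bar_inj pi h5
  have haa : a = a' := by
    funext i
    by_cases hi : i ∈ idxList n
    · exact hak i hi
    · rw [ha i hi, ha' i hi]
  refine ⟨hu, ?_, haa⟩
  -- recover `b`
  rw [haa] at heq
  have hYeq : T.Y (n : ℤ) (u, b) = T.Y (n : ℤ) (u', b') := mul_right_cancel heq
  have h6 := congrArg (fun g : Wm n R V ≃ₗ[Rᵐᵒᵖ] Wm n R V =>
    crd n (n : ℤ) (g (ebas n R V (-(n : ℤ))))) hYeq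
  simp only [hTY (n : ℤ) (n_mem_Omega hn) u b hub,
    hTY (n : ℤ) (n_mem_Omega hn) u' b' hub'] at h6
  unfold TiFun at h6
  rw [BW_embV, BW_embV, hBn] at h6
  simp only [ebas_snd, B_zero_right, mul_zero, MulOpposite.op_zero, zero_smul,
    sub_zero] at h6
  rw [← crd_apply, crd_ebas (negn_mem_Omega hn), if_pos rfl] at h6
  simp only [mul_one, map_add, map_sub, crd_smul, crd_embV,
    crd_ebas (n_mem_Omega hn),
    if_neg (show ¬((n : ℤ) = -(n : ℤ)) by omega), if_pos rfl,
    eq_self_iff_true, if_true,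
    zero_sub, zero_add, one_mul, mul_zero, add_zero, zero_mul] at h6
  -- h6 : -(epsI pi n * b * epsI pi (-n)) = -(epsI pi n * b' * epsI pi (-n))
  have h7 := neg_injective h6
  exact eps_cancel_left (pi := pi) (n : ℤ)
    (eps_cancel_right (pi := pi) (-(n : ℤ)) h7)

end VecAux

/-- The natural epimorphism `StU(2n,R,𝔏) → EU(2n,R,𝔏)` (here `φ`, the map to the
unitary group sending generators to the elementary transvections) restricts to an
isomorphism of `ᵚᵗᵘU₁` onto its image `ᵉᵘU₁`; in particular every element of
`ᵚᵗᵘU₁` has a unique decomposition `X_n(ζ)·X_{n,1}(a₁)·…·X_{n,−1}(a₋₁)`. -/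
theorem U1_iso (f : AntiHermitianForm R pi V) (L : OddFormParameter f)
    (n : ℕ) (hn : 3 ≤ n)
    {G : Type u} [Group G] (S : StURels (n : ℕ∞) f L G) (hS : IsStU S)
    (T : StURels (n : ℕ∞) f L (Wm n R V ≃ₗ[Rᵐᵒᵖ] Wm n R V))
    (hTX : ∀ i j : ℤ, i ∈ Omega (n : ℕ∞) → j ∈ Omega (n : ℕ∞) → j ≠ i → j ≠ -i →
      ∀ (a : R) (w : Wm n R V), T.X i j a w = TijFun n f i j a w)
    (hTY : ∀ i : ℤ, i ∈ Omega (n : ℕ∞) → ∀ (u : V) (b : R), (u, b) ∈ L.carrier →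
      ∀ w : Wm n R V, T.Y i (u, b) w = TiFun n f i u b w)
    (φ : G →* (Wm n R V ≃ₗ[Rᵐᵒᵖ] Wm n R V))
    (hφX : ∀ i j : ℤ, i ∈ Omega (n : ℕ∞) → j ∈ Omega (n : ℕ∞) → j ≠ i → j ≠ -i →
      ∀ a : R, φ (S.X i j a) = T.X i j a)
    (hφY : ∀ i : ℤ, i ∈ Omega (n : ℕ∞) → ∀ ξ ∈ L.carrier, φ (S.Y i ξ) = T.Y i ξ)
    :
    (∀ x ∈ U1 S, ∀ y ∈ U1 S, φ x = φ y → x = y) ∧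
    (∀ x ∈ U1 S, ∃! p : (V × R) × (ℤ → R),
      (p.1 ∈ L.carrier ∧ ∀ i : ℤ, i ∉ idxList n → p.2 i = 0) ∧
      x = S.Y (n : ℤ) p.1 * ((idxList n).map fun i => S.X (n : ℤ) i (p.2 i)).prod) := by
  have hφP : ∀ a : ℤ → R, φ (((idxList n).map fun i => S.X (n : ℤ) i (a i)).prod)
      = ((idxList n).map fun i => T.X (n : ℤ) i (a i)).prod := by
    intro a
    rw [map_list_prod, List.map_map]
    congr 1
    refine List.map_congr_left fun i hi => ?_
    have hg := (mem_idxList_iff hn).mp hi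
    exact hφX (n : ℤ) i (n_mem_Omega hn) hg.1 hg.2.1 hg.2.2 (a i)
  have key : ∀ (ξ ζ : V × R) (a a' : ℤ → R), ξ ∈ L.carrier → ζ ∈ L.carrier →
      (∀ i ∉ idxList n, a i = 0) → (∀ i ∉ idxList n, a' i = 0) →
      φ (S.Y (n : ℤ) ξ * ((idxList n).map fun i => S.X (n : ℤ) i (a i)).prod)
        = φ (S.Y (n : ℤ) ζ * ((idxList n).map fun i => S.X (n : ℤ) i (a' i)).prod) →
      ξ = ζ ∧ a = a' := by
    intro ξ ζ a a' hξ hζ ha ha' hphi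
    rw [map_mul, map_mul, hφP, hφP, hφY (n : ℤ) (n_mem_Omega hn) ξ hξ,
      hφY (n : ℤ) (n_mem_Omega hn) ζ hζ] at hphi
    obtain ⟨hu, hb, haa⟩ := param_inj hn T hTX hTY (u := ξ.1) (b := ξ.2)
      (u' := ζ.1) (b' := ζ.2) hξ hζ ha ha' hphi
    exact ⟨Prod.ext hu hb, haa⟩
  constructor
  · intro x hx y hy hxy
    obtain ⟨ξ, a, hξ, ha, rfl⟩ := exists_nf S hn hx
    obtain ⟨ζ, a', hζ, ha', rfl⟩ := exists_nf S hn hy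
    obtain ⟨h1, h2⟩ := key ξ ζ a a' hξ hζ ha ha' hxy
    rw [h1, h2]
  · intro x hx
    obtain ⟨ξ, a, hξ, ha, hxeq⟩ := exists_nf S hn hx
    refine ⟨(ξ, a), ⟨⟨hξ, fun i hi => ha i hi⟩, hxeq⟩, ?_⟩
    rintro ⟨ζ, a'⟩ ⟨⟨hζ, ha'⟩, hxeq'⟩
    obtain ⟨h1, h2⟩ := key ζ ξ a' a hζ hξ ha' ha (by rw [← hxeq', ← hxeq])
    exact Prod.ext h1 h2
end
end

section
/- Let n ≥ 4 or n = ∞, and let ε be a central extension of StU(2n,R,𝔏) satisfying property (†). Then for all i ∈ Ω, j ∈ Ω∖{±i}, k ∈ Ω∖{−i, j}, h ∈ Ω∖{i, −j, ±k} and all a, b ∈ R, one has [ε⁻¹X_ij(a), ε⁻¹X_kh(b)] = 1. In particular, if n ≥ 5 or n = ∞, property (†) itself holds for every central extension of StU(2n,R,𝔏). -/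
open MulOpposite
open scoped commutatorElement

universe u

variable {R : Type u} [Ring R] {pi : PseudoInvolution R}
variable {V : Type u} [AddCommGroup V] [Module Rᵐᵒᵖ V]

/-- Property (†): preimages of `X_ij(a)` and `X_kh(b)` commute whenever the eight
indices `±i, ±j, ±k, ±h` are pairwise distinct. -/
def DaggerProp {n : ℕ∞} {f : AntiHermitianForm R pi V} {L : OddFormParameter f}
    {G : Type u} [Group G] (S : StURels n f L G)
    {H : Type u} [Group H] (ε : H →* G) : Prop :=
  ∀ i j k h : ℤ, i ∈ Omega n → j ∈ Omega n → k ∈ Omega n → h ∈ Omega n →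
    ({i, -i, j, -j, k, -k, h, -h} : Finset ℤ).card = 8 →
    ∀ a b : R, ∀ u v : H, ε u = S.X i j a → ε v = S.X k h b → ⁅u, v⁆ = 1

section GroupHelpers
variable {H' : Type*} [Group H']

lemma comm_central_mul_left {c : H'} (hc : ∀ g : H', c * g = g * c) (x w : H') :
    ⁅c * x, w⁆ = ⁅x, w⁆ := by
  have h1 : c⁻¹ * w⁻¹ = w⁻¹ * c⁻¹ := by rw [← mul_inv_rev, ← mul_inv_rev, hc]
  calc ⁅c*x, w⁆ = c * (x*w*x⁻¹) * (c⁻¹*w⁻¹) := by group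
    _ = c * (x*w*x⁻¹) * (w⁻¹*c⁻¹) := by rw [h1]
    _ = c * (x*w*x⁻¹*w⁻¹) * c⁻¹ := by group
    _ = (x*w*x⁻¹*w⁻¹) * c * c⁻¹ := by rw [hc]
    _ = ⁅x,w⁆ := by group

lemma comm_central_mul_right {c : H'} (hc : ∀ g : H', c * g = g * c) (w y : H') :
    ⁅w, c * y⁆ = ⁅w, y⁆ := by
  rw [← commutatorElement_inv, comm_central_mul_left hc, commutatorElement_inv]

lemma comm_comm_central (u v₁ v₂ : H') (h1 : ⁅u, v₁⁆ ∈ Subgroup.center H')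
    (h2 : ⁅u, v₂⁆ ∈ Subgroup.center H') : ⁅u, ⁅v₁, v₂⁆⁆ = 1 := by
  have hc1 : ∀ g : H', ⁅u, v₁⁆ * g = g * ⁅u, v₁⁆ := fun g => (Subgroup.mem_center_iff.mp h1 g).symm
  have hc2 : ∀ g : H', ⁅u, v₂⁆ * g = g * ⁅u, v₂⁆ := fun g => (Subgroup.mem_center_iff.mp h2 g).symm
  have e : u * ⁅v₁, v₂⁆ * u⁻¹ = ⁅u * v₁ * u⁻¹, u * v₂ * u⁻¹⁆ := by group
  have e1 : u * v₁ * u⁻¹ = ⁅u, v₁⁆ * v₁ := by group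
  have e2 : u * v₂ * u⁻¹ = ⁅u, v₂⁆ * v₂ := by group
  rw [e1, e2, comm_central_mul_left hc1, comm_central_mul_right hc2] at e
  calc ⁅u, ⁅v₁, v₂⁆⁆ = (u * ⁅v₁, v₂⁆ * u⁻¹) * ⁅v₁, v₂⁆⁻¹ := by group
    _ = 1 := by rw [e]; group

lemma comm_mul_central (u w z : H') (hz : z ∈ Subgroup.center H') : ⁅u, w * z⁆ = ⁅u, w⁆ := by
  have hc : ∀ g : H', z * g = g * z := fun g => (Subgroup.mem_center_iff.mp hz g).symm
  rw [← commutatorElement_inv, ← hc w, comm_central_mul_left hc, commutatorElement_inv]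

end GroupHelpers

section CombHelpers

lemma card_six (a b c d e f : ℤ) : ({a,b,c,d,e,f} : Finset ℤ).card ≤ 6 := by
  have h1 := Finset.card_insert_le a ({b,c,d,e,f} : Finset ℤ)
  have h2 := Finset.card_insert_le b ({c,d,e,f} : Finset ℤ)
  have h3 := Finset.card_insert_le c ({d,e,f} : Finset ℤ)
  have h4 := Finset.card_insert_le d ({e,f} : Finset ℤ)
  have h5 := Finset.card_insert_le e ({f} : Finset ℤ)
  have h6 := Finset.card_singleton f
  simp only [Finset.insert_eq] at *
  omega

lemma card_eight_of_natAbs (i j k h : ℤ) (hi : i ≠ 0) (hj : j ≠ 0) (hk : k ≠ 0) (hh : h ≠ 0)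
    (h1 : i.natAbs ≠ j.natAbs) (h2 : i.natAbs ≠ k.natAbs) (h3 : i.natAbs ≠ h.natAbs)
    (h4 : j.natAbs ≠ k.natAbs) (h5 : j.natAbs ≠ h.natAbs) (h6 : k.natAbs ≠ h.natAbs) :
    ({i, -i, j, -j, k, -k, h, -h} : Finset ℤ).card = 8 := by
  rw [Finset.card_insert_of_notMem (by simp only [Finset.mem_insert, Finset.mem_singleton]; omega),
      Finset.card_insert_of_notMem (by simp only [Finset.mem_insert, Finset.mem_singleton]; omega),
      Finset.card_insert_of_notMem (by simp only [Finset.mem_insert, Finset.mem_singleton]; omega),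
      Finset.card_insert_of_notMem (by simp only [Finset.mem_insert, Finset.mem_singleton]; omega),
      Finset.card_insert_of_notMem (by simp only [Finset.mem_insert, Finset.mem_singleton]; omega),
      Finset.card_insert_of_notMem (by simp only [Finset.mem_insert, Finset.mem_singleton]; omega),
      Finset.card_insert_of_notMem (by simp only [Finset.mem_singleton]; omega),
      Finset.card_singleton]

lemma natAbs_of_card_eight (i j k h : ℤ)
    (hc : ({i, -i, j, -j, k, -k, h, -h} : Finset ℤ).card = 8) :
    i.natAbs ≠ j.natAbs ∧ i.natAbs ≠ k.natAbs ∧ i.natAbs ≠ h.natAbs ∧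
    j.natAbs ≠ k.natAbs ∧ j.natAbs ≠ h.natAbs ∧ k.natAbs ≠ h.natAbs := by
  refine ⟨?_, ?_, ?_, ?_, ?_, ?_⟩ <;> intro he
  · have hs : ({i, -i, j, -j, k, -k, h, -h} : Finset ℤ) ⊆ {i, -i, k, -k, h, -h} := by
      intro x hx; simp only [Finset.mem_insert, Finset.mem_singleton] at hx ⊢; omega
    have := le_trans (Finset.card_le_card hs) (card_six _ _ _ _ _ _); omega
  · have hs : ({i, -i, j, -j, k, -k, h, -h} : Finset ℤ) ⊆ {i, -i, j, -j, h, -h} := by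
      intro x hx; simp only [Finset.mem_insert, Finset.mem_singleton] at hx ⊢; omega
    have := le_trans (Finset.card_le_card hs) (card_six _ _ _ _ _ _); omega
  · have hs : ({i, -i, j, -j, k, -k, h, -h} : Finset ℤ) ⊆ {i, -i, j, -j, k, -k} := by
      intro x hx; simp only [Finset.mem_insert, Finset.mem_singleton] at hx ⊢; omega
    have := le_trans (Finset.card_le_card hs) (card_six _ _ _ _ _ _); omega
  · have hs : ({i, -i, j, -j, k, -k, h, -h} : Finset ℤ) ⊆ {i, -i, j, -j, h, -h} := by
      intro x hx; simp only [Finset.mem_insert, Finset.mem_singleton] at hx ⊢; omega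
    have := le_trans (Finset.card_le_card hs) (card_six _ _ _ _ _ _); omega
  · have hs : ({i, -i, j, -j, k, -k, h, -h} : Finset ℤ) ⊆ {i, -i, j, -j, k, -k} := by
      intro x hx; simp only [Finset.mem_insert, Finset.mem_singleton] at hx ⊢; omega
    have := le_trans (Finset.card_le_card hs) (card_six _ _ _ _ _ _); omega
  · have hs : ({i, -i, j, -j, k, -k, h, -h} : Finset ℤ) ⊆ {i, -i, j, -j, k, -k} := by
      intro x hx; simp only [Finset.mem_insert, Finset.mem_singleton] at hx ⊢; omega
    have := le_trans (Finset.card_le_card hs) (card_six _ _ _ _ _ _); omega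

end CombHelpers

lemma card_three (a b c : ℕ) : ({a,b,c} : Finset ℕ).card ≤ 3 := by
  have h1 := Finset.card_insert_le a ({b,c} : Finset ℕ)
  have h2 := Finset.card_insert_le b ({c} : Finset ℕ)
  have h3 := Finset.card_singleton c
  simp only [Finset.insert_eq] at *
  omega

lemma natAbs_card_le_three (i j k h : ℤ) (hi0 : i ≠ 0) (hj0 : j ≠ 0) (hk0 : k ≠ 0) (hh0 : h ≠ 0)
    (hcard : ({i, -i, j, -j, k, -k, h, -h} : Finset ℤ).card ≠ 8) :
    ({i.natAbs, j.natAbs, k.natAbs, h.natAbs} : Finset ℕ).card ≤ 3 := by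
  by_contra hgt
  have e1 : i.natAbs ≠ j.natAbs := by
    intro he
    have hs : ({i.natAbs, j.natAbs, k.natAbs, h.natAbs} : Finset ℕ) ⊆
        {j.natAbs, k.natAbs, h.natAbs} := by
      intro x hx; simp only [Finset.mem_insert, Finset.mem_singleton] at hx ⊢; omega
    have := le_trans (Finset.card_le_card hs) (card_three _ _ _); omega
  have e2 : i.natAbs ≠ k.natAbs := by
    intro he
    have hs : ({i.natAbs, j.natAbs, k.natAbs, h.natAbs} : Finset ℕ) ⊆
        {j.natAbs, k.natAbs, h.natAbs} := by
      intro x hx; simp only [Finset.mem_insert, Finset.mem_singleton] at hx ⊢; omega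
    have := le_trans (Finset.card_le_card hs) (card_three _ _ _); omega
  have e3 : i.natAbs ≠ h.natAbs := by
    intro he
    have hs : ({i.natAbs, j.natAbs, k.natAbs, h.natAbs} : Finset ℕ) ⊆
        {j.natAbs, k.natAbs, h.natAbs} := by
      intro x hx; simp only [Finset.mem_insert, Finset.mem_singleton] at hx ⊢; omega
    have := le_trans (Finset.card_le_card hs) (card_three _ _ _); omega
  have e4 : j.natAbs ≠ k.natAbs := by
    intro he
    have hs : ({i.natAbs, j.natAbs, k.natAbs, h.natAbs} : Finset ℕ) ⊆
        {i.natAbs, k.natAbs, h.natAbs} := by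
      intro x hx; simp only [Finset.mem_insert, Finset.mem_singleton] at hx ⊢; omega
    have := le_trans (Finset.card_le_card hs) (card_three _ _ _); omega
  have e5 : j.natAbs ≠ h.natAbs := by
    intro he
    have hs : ({i.natAbs, j.natAbs, k.natAbs, h.natAbs} : Finset ℕ) ⊆
        {i.natAbs, k.natAbs, h.natAbs} := by
      intro x hx; simp only [Finset.mem_insert, Finset.mem_singleton] at hx ⊢; omega
    have := le_trans (Finset.card_le_card hs) (card_three _ _ _); omega
  have e6 : k.natAbs ≠ h.natAbs := by
    intro he
    have hs : ({i.natAbs, j.natAbs, k.natAbs, h.natAbs} : Finset ℕ) ⊆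
        {i.natAbs, j.natAbs, h.natAbs} := by
      intro x hx; simp only [Finset.mem_insert, Finset.mem_singleton] at hx ⊢; omega
    have := le_trans (Finset.card_le_card hs) (card_three _ _ _); omega
  exact hcard (card_eight_of_natAbs i j k h hi0 hj0 hk0 hh0 e1 e2 e3 e4 e5 e6)

lemma mem_omega_of (n : ℕ∞) (N : ℕ) (hn : (N : ℕ∞) ≤ n) (m : ℤ) (h0 : m ≠ 0)
    (hN : m.natAbs ≤ N) : m ∈ Omega n :=
  ⟨h0, le_trans (Nat.cast_le.mpr hN) hn⟩

lemma fresh_of_small (n : ℕ∞) (N : ℕ) (hn : (N : ℕ∞) ≤ n) (i j k h : ℤ)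
    (hA : ({i.natAbs, j.natAbs, k.natAbs, h.natAbs} : Finset ℕ).card < N) :
    ∃ l : ℤ, l ∈ Omega n ∧ l ≠ i ∧ l ≠ -i ∧ l ≠ j ∧ l ≠ -j ∧ l ≠ k ∧ l ≠ -k ∧
      l ≠ h ∧ l ≠ -h := by
  have hex : ∃ m ∈ Finset.Icc 1 N, m ∉ ({i.natAbs, j.natAbs, k.natAbs, h.natAbs} : Finset ℕ) := by
    by_contra hc
    push_neg at hc
    have hsub : Finset.Icc 1 N ⊆ ({i.natAbs, j.natAbs, k.natAbs, h.natAbs} : Finset ℕ) :=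
      fun m hm => hc m hm
    have := Finset.card_le_card hsub
    rw [Nat.card_Icc] at this
    omega
  obtain ⟨m, hmt, hmA⟩ := hex
  rw [Finset.mem_Icc] at hmt
  simp only [Finset.mem_insert, Finset.mem_singleton] at hmA
  push_neg at hmA
  obtain ⟨a1, a2, a3, a4⟩ := hmA
  refine ⟨(m : ℤ), mem_omega_of n N hn m (by omega) (by omega), by omega, by omega,
    by omega, by omega, by omega, by omega, by omega, by omega⟩

lemma exists_fresh4 (n : ℕ∞) (hn : 4 ≤ n) (i j k h : ℤ) (hi0 : i ≠ 0) (hj0 : j ≠ 0)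
    (hk0 : k ≠ 0) (hh0 : h ≠ 0)
    (hcard : ({i, -i, j, -j, k, -k, h, -h} : Finset ℤ).card ≠ 8) :
    ∃ l : ℤ, l ∈ Omega n ∧ l ≠ i ∧ l ≠ -i ∧ l ≠ j ∧ l ≠ -j ∧ l ≠ k ∧ l ≠ -k ∧
      l ≠ h ∧ l ≠ -h := by
  have hn' : ((4 : ℕ) : ℕ∞) ≤ n := by exact_mod_cast hn
  have h3 := natAbs_card_le_three i j k h hi0 hj0 hk0 hh0 hcard
  exact fresh_of_small n 4 hn' i j k h (by omega)

lemma exists_fresh5 (n : ℕ∞) (hn : 5 ≤ n) (i j k h : ℤ) :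
    ∃ l : ℤ, l ∈ Omega n ∧ l ≠ i ∧ l ≠ -i ∧ l ≠ j ∧ l ≠ -j ∧ l ≠ k ∧ l ≠ -k ∧
      l ≠ h ∧ l ≠ -h := by
  have hn' : ((5 : ℕ) : ℕ∞) ≤ n := by exact_mod_cast hn
  have h4 : ({i.natAbs, j.natAbs, k.natAbs, h.natAbs} : Finset ℕ).card ≤ 4 := by
    have h1 := Finset.card_insert_le i.natAbs ({j.natAbs, k.natAbs, h.natAbs} : Finset ℕ)
    have := card_three j.natAbs k.natAbs h.natAbs
    simp only [Finset.insert_eq] at *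
    omega
  exact fresh_of_small n 5 hn' i j k h (by omega)

/-- The workhorse: if a fresh index `l` (disjoint from `±i,±j,±k,±h`) exists, then any
preimages of `X_ij(a)` and `X_kh(b)` under a central extension commute. -/
lemma key_commute {n : ℕ∞} {f : AntiHermitianForm R pi V} {L : OddFormParameter f}
    {G : Type u} [Group G] (S : StURels n f L G)
    {H : Type u} [Group H] (ε : H →* G) (hce : IsCentralExtension ε)
    (i j k h l : ℤ) (hi : i ∈ Omega n) (hj : j ∈ Omega n) (hk : k ∈ Omega n)
    (hh : h ∈ Omega n) (hl : l ∈ Omega n)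
    (hji : j ≠ i) (hji' : j ≠ -i) (hhk : h ≠ k) (hhk' : h ≠ -k)
    (hki : k ≠ -i) (hkj : k ≠ j) (hhi : h ≠ i) (hhj : h ≠ -j)
    (hl1 : l ≠ i) (hl2 : l ≠ -i) (hl3 : l ≠ j) (hl4 : l ≠ -j)
    (hl5 : l ≠ k) (hl6 : l ≠ -k) (hl7 : l ≠ h) (hl8 : l ≠ -h)
    (a b : R) (u v : H) (hu : ε u = S.X i j a) (hv : ε v = S.X k h b) : ⁅u, v⁆ = 1 := by
  have hhl : h ≠ l := Ne.symm hl7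
  have hhl' : h ≠ -l := by omega
  obtain ⟨v₁, hv₁⟩ := hce.surjective (S.X k l b)
  obtain ⟨v₂, hv₂⟩ := hce.surjective (S.X l h 1)
  -- the commutator of v₁, v₂ is a preimage of X k h b
  have e5 : ⁅S.X k l b, S.X l h 1⁆ = S.X k h b := by
    rw [S.rel5 k l h hk hl hh hl5 hl6 hhl hhl' hhk hhk', mul_one]
  have hzker : ⁅v₁, v₂⁆⁻¹ * v ∈ ε.ker := by
    rw [MonoidHom.mem_ker, map_mul, map_inv, map_commutatorElement, hv₁, hv₂, e5, hv]
    group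
  have hz : ⁅v₁, v₂⁆⁻¹ * v ∈ Subgroup.center H := hce.central hzker
  -- u commutes with v₁ and v₂ up to center
  have hc1 : ⁅u, v₁⁆ ∈ Subgroup.center H := by
    refine hce.central ?_
    rw [MonoidHom.mem_ker, map_commutatorElement, hu, hv₁]
    exact S.rel3 i j k l hi hj hk hl hji hji' hl5 hl6 hkj hki hl1 hl4 a b
  have hc2 : ⁅u, v₂⁆ ∈ Subgroup.center H := by
    refine hce.central ?_
    rw [MonoidHom.mem_ker, map_commutatorElement, hu, hv₂]
    exact S.rel3 i j l h hi hj hl hh hji hji' hhl hhl' hl3 hl2 hhi hhj a 1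
  have h1 : ⁅u, v⁆ = ⁅u, ⁅v₁, v₂⁆ * (⁅v₁, v₂⁆⁻¹ * v)⁆ := by group
  rw [h1, comm_mul_central u ⁅v₁, v₂⁆ _ hz]
  exact comm_comm_central u v₁ v₂ hc1 hc2

set_option maxHeartbeats 800000 in
/-- For `n ≥ 4` and a central extension `ε` of `StU(2n,R,𝔏)` with property (†), any
two preimages of `X_ij(a)` and `X_kh(b)` commute whenever `j ∉ {±i}`, `h ∉ {±k}`,
`k ∉ {−i, j}` and `h ∉ {i, −j, ±k}`.  In particular, for `n ≥ 5` (or `n = ∞`)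
property (†) holds automatically for every central extension of `StU(2n,R,𝔏)`. -/
theorem dagger_strengthened (f : AntiHermitianForm R pi V) (L : OddFormParameter f)
    (n : ℕ∞) (hn : 4 ≤ n)
    {G : Type u} [Group G] (S : StURels n f L G) (hS : IsStU S) :
    (∀ (H : Type u) [Group H], ∀ ε : H →* G, IsCentralExtension ε → DaggerProp S ε →
      ∀ i j k h : ℤ, i ∈ Omega n → j ∈ Omega n → k ∈ Omega n → h ∈ Omega n →
        j ≠ i → j ≠ -i → h ≠ k → h ≠ -k → k ≠ -i → k ≠ j → h ≠ i → h ≠ -j →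
        ∀ a b : R, ∀ u v : H, ε u = S.X i j a → ε v = S.X k h b → ⁅u, v⁆ = 1) ∧
    (5 ≤ n → ∀ (H : Type u) [Group H], ∀ ε : H →* G, IsCentralExtension ε →
      DaggerProp S ε) := by
  constructor
  · intro H _ ε hce hdag i j k h hi hj hk hh hji hji' hhk hhk' hki hkj hhi hhj a b u v hu hv
    by_cases hcard : ({i, -i, j, -j, k, -k, h, -h} : Finset ℤ).card = 8
    · exact hdag i j k h hi hj hk hh hcard a b u v hu hv
    · obtain ⟨l, hl, hl1, hl2, hl3, hl4, hl5, hl6, hl7, hl8⟩ :=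
        exists_fresh4 n hn i j k h hi.1 hj.1 hk.1 hh.1 hcard
      exact key_commute S ε hce i j k h l hi hj hk hh hl hji hji' hhk hhk' hki hkj hhi hhj
        hl1 hl2 hl3 hl4 hl5 hl6 hl7 hl8 a b u v hu hv
  · intro hn5 H _ ε hce i j k h hi hj hk hh hcard a b u v hu hv
    obtain ⟨d1, d2, d3, d4, d5, d6⟩ := natAbs_of_card_eight i j k h hcard
    clear hcard
    obtain ⟨l, hl, hl1, hl2, hl3, hl4, hl5, hl6, hl7, hl8⟩ := exists_fresh5 n hn5 i j k h
    have hji : j ≠ i := fun e => d1 (congrArg Int.natAbs e).symm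
    have hji' : j ≠ -i := fun e => d1 ((congrArg Int.natAbs e).trans (Int.natAbs_neg i)).symm
    have hhk : h ≠ k := fun e => d6 (congrArg Int.natAbs e).symm
    have hhk' : h ≠ -k := fun e => d6 ((congrArg Int.natAbs e).trans (Int.natAbs_neg k)).symm
    have hki : k ≠ -i := fun e => d2 ((congrArg Int.natAbs e).trans (Int.natAbs_neg i)).symm
    have hkj : k ≠ j := fun e => d4 (congrArg Int.natAbs e).symm
    have hhi : h ≠ i := fun e => d3 (congrArg Int.natAbs e).symm
    have hhj : h ≠ -j := fun e => d5 ((congrArg Int.natAbs e).trans (Int.natAbs_neg j)).symm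
    exact key_commute S ε hce i j k h l hi hj hk hh hl hji hji' hhk hhk' hki hkj hhi hhj
      hl1 hl2 hl3 hl4 hl5 hl6 hl7 hl8 a b u v hu hv
end

section
/- Let n ≥ 4 or n = ∞, and let ε be a central extension of StU(2n,R,𝔏) satisfying property (†). Then for all indices i, j, k, h ∈ Ω with Card{±i,±j,±k,±h} = 8 and all a, b ∈ R, one has [ε⁻¹X_ki(a), ε⁻¹X_ih(b)] = [ε⁻¹X_kj(ab), ε⁻¹X_jh(1)]. -/
open MulOpposite
open scoped commutatorElement

universe u

variable {R : Type u} [Ring R] {pi : PseudoInvolution R}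
variable {V : Type u} [AddCommGroup V] [Module Rᵐᵒᵖ V]

section Auxiliary

private lemma aux_comm_left {H : Type*} [Group H] (u v z : H)
    (hz : ∀ g : H, g * z = z * g) : ⁅u * z, v⁆ = ⁅u, v⁆ := by
  simp only [commutatorElement_def, mul_inv_rev, mul_assoc]
  rw [← mul_assoc z v, ← hz v, mul_assoc v, mul_inv_cancel_left]

private lemma aux_comm_right {H : Type*} [Group H] (u v z : H)
    (hz : ∀ g : H, g * z = z * g) : ⁅u, v * z⁆ = ⁅u, v⁆ := by
  simp only [commutatorElement_def, mul_inv_rev, mul_assoc]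
  rw [← mul_assoc z, ← hz u⁻¹, mul_assoc u⁻¹, mul_inv_cancel_left]

/-- The Steinberg central trick: for a homomorphism with central kernel,
commutators of lifts depend only on the images. -/
private lemma central_comm_congr {H G : Type*} [Group H] [Group G] (ε : H →* G)
    (hc : ε.ker ≤ Subgroup.center H) {u₁ u₂ v₁ v₂ : H}
    (hu : ε u₁ = ε u₂) (hv : ε v₁ = ε v₂) : ⁅u₁, v₁⁆ = ⁅u₂, v₂⁆ := by
  have hzu : ∀ g : H, g * (u₁⁻¹ * u₂) = (u₁⁻¹ * u₂) * g :=
    Subgroup.mem_center_iff.mp (hc (by simp [MonoidHom.mem_ker, ← hu]))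
  have hzv : ∀ g : H, g * (v₁⁻¹ * v₂) = (v₁⁻¹ * v₂) * g :=
    Subgroup.mem_center_iff.mp (hc (by simp [MonoidHom.mem_ker, ← hv]))
  have e1 : u₂ = u₁ * (u₁⁻¹ * u₂) := by rw [mul_inv_cancel_left]
  have e2 : v₂ = v₁ * (v₁⁻¹ * v₂) := by rw [mul_inv_cancel_left]
  rw [e1, e2, aux_comm_left _ _ _ hzu, aux_comm_right _ _ _ hzv]

private lemma aux_key_identity {H : Type*} [Group H] (u w v' : H) (hc : u * v' = v' * u) :
    ⁅u, ⁅w, v'⁆⁆ = ⁅⁅u, w⁆, w * v' * w⁻¹⁆ := by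
  have c : Commute u v' := hc
  have h1 : ∀ x : H, x * v'⁻¹ * u⁻¹ = x * u⁻¹ * v'⁻¹ := fun x => by
    rw [mul_assoc, mul_assoc, c.inv_inv.symm.eq]
  have h2 : ∀ x : H, x * u⁻¹ * v' = x * v' * u⁻¹ := fun x => by
    rw [mul_assoc, mul_assoc, c.inv_left.eq]
  simp only [commutatorElement_def, mul_inv_rev, inv_inv, ← mul_assoc]
  rw [h1, mul_assoc _ v'⁻¹ v', inv_mul_cancel, mul_one,
    inv_mul_cancel_right, inv_mul_cancel_right, h2, inv_mul_cancel_right]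

private lemma aux_conj_comm {H : Type*} [Group H] (t w v' : H) :
    ⁅t, w * v' * w⁻¹⁆ = w * ⁅w⁻¹ * t * w, v'⁆ * w⁻¹ := by
  simp only [commutatorElement_def]; group

private lemma aux_finset_perm (i j k h : ℤ) :
    ({k, -k, i, -i, j, -j, h, -h} : Finset ℤ) = {i, -i, j, -j, k, -k, h, -h} := by
  ext x; simp only [Finset.mem_insert, Finset.mem_singleton]; tauto

end Auxiliary

/-- For `n ≥ 4` and a central extension `ε` of `StU(2n,R,𝔏)` with property (†):
whenever the eight indices `±i, ±j, ±k, ±h` are pairwise distinct,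
`[ε⁻¹X_ki(a), ε⁻¹X_ih(b)] = [ε⁻¹X_kj(ab), ε⁻¹X_jh(1)]`. -/
theorem S_well_defined (f : AntiHermitianForm R pi V) (L : OddFormParameter f)
    (n : ℕ∞) (hn : 4 ≤ n)
    {G : Type u} [Group G] (S : StURels n f L G) (hS : IsStU S)
    {H : Type u} [Group H] (ε : H →* G) (hε : IsCentralExtension ε)
    (hdag : DaggerProp S ε) :
    ∀ i j k h : ℤ, i ∈ Omega n → j ∈ Omega n → k ∈ Omega n → h ∈ Omega n →
      ({i, -i, j, -j, k, -k, h, -h} : Finset ℤ).card = 8 →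
      ∀ a b : R, ∀ u v u' v' : H,
        ε u = S.X k i a → ε v = S.X i h b →
        ε u' = S.X k j (a * b) → ε v' = S.X j h 1 →
        ⁅u, v⁆ = ⁅u', v'⁆ := by
  intro i j k h hi hj hk hh hcard a b u v u' v' hu hv hu' hv'
  have hnd : ([i, -i, j, -j, k, -k, h, -h] : List ℤ).Nodup := by
    rw [← Multiset.coe_nodup, ← Multiset.toFinset_card_eq_card_iff_nodup
      (m := (↑[i, -i, j, -j, k, -k, h, -h] : Multiset ℤ))]
    simpa using hcard
  simp only [List.nodup_cons, List.mem_cons, List.not_mem_nil, or_false, not_or,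
    List.nodup_nil, and_true, List.mem_singleton] at hnd
  obtain ⟨⟨hii, hij, hijn, hik, hikn, hih, hihn⟩, ⟨hnij, hnijn, hnik, hnikn, hnih, hnihn⟩,
    ⟨hjj, hjk, hjkn, hjh, hjhn⟩, ⟨hnjk, hnjkn, hnjh, hnjhn⟩,
    ⟨hkk, hkh, hkhn⟩, ⟨hnkh, hnkhn⟩, hhh, _⟩ := hnd
  have nji : j ≠ i := Ne.symm hij
  have njni : j ≠ -i := Ne.symm hnij
  have nhj : h ≠ j := Ne.symm hjh
  have nhnj : h ≠ -j := Ne.symm hnjh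
  have nhi : h ≠ i := Ne.symm hih
  have nhni : h ≠ -i := Ne.symm hnih
  have nik : i ≠ k := hik
  have nink : i ≠ -k := hikn
  have njk : j ≠ k := hjk
  have njnk : j ≠ -k := hjkn
  have nhk : h ≠ k := Ne.symm hkh
  have nhnk : h ≠ -k := Ne.symm hnkh
  have njnj : j ≠ -j := hjj
  have nkni : k ≠ -i := Ne.symm hnik
  have nkj : k ≠ j := Ne.symm hjk
  have hcard2 : ({k, -k, i, -i, j, -j, h, -h} : Finset ℤ).card = 8 := by
    rw [aux_finset_perm]; exact hcard
  obtain ⟨w, hw⟩ := hε.surjective (S.X i j b)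
  have huv' : ⁅u, v'⁆ = 1 := hdag k i j h hk hi hj hh hcard2 a 1 u v' hu hv'
  have hcuv' : u * v' = v' * u := commutatorElement_eq_one_iff_mul_comm.mp huv'
  have hεwv' : ε ⁅w, v'⁆ = S.X i h b := by
    rw [map_commutatorElement, hw, hv',
      S.rel5 i j h hi hj hh nji njni nhj nhnj nhi nhni, mul_one]
  have step1 : ⁅u, v⁆ = ⁅u, ⁅w, v'⁆⁆ :=
    central_comm_congr ε hε.central rfl (hv.trans hεwv'.symm)
  have step2 : ⁅u, ⁅w, v'⁆⁆ = ⁅⁅u, w⁆, w * v' * w⁻¹⁆ := aux_key_identity u w v' hcuv'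
  have step3 : ⁅⁅u, w⁆, w * v' * w⁻¹⁆ = w * ⁅w⁻¹ * ⁅u, w⁆ * w, v'⁆ * w⁻¹ :=
    aux_conj_comm _ _ _
  have hεuw : ε ⁅u, w⁆ = S.X k j (a * b) := by
    rw [map_commutatorElement, hu, hw, S.rel5 k i j hk hi hj nik nink nji njni njk njnk]
  have hG3 : S.X i j b * S.X k j (a * b) = S.X k j (a * b) * S.X i j b :=
    commutatorElement_eq_one_iff_mul_comm.mp
      (S.rel3 i j k j hi hj hk hj nji njni njk njnk nkj nkni nji njnj b (a * b))
  have hεconj : ε (w⁻¹ * ⁅u, w⁆ * w) = S.X k j (a * b) := by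
    rw [map_mul, map_mul, map_inv, hw, hεuw, mul_assoc, ← hG3, inv_mul_cancel_left]
  have step4 : ⁅w⁻¹ * ⁅u, w⁆ * w, v'⁆ = ⁅u', v'⁆ :=
    central_comm_congr ε hε.central (hεconj.trans hu'.symm) rfl
  have hεc : ε ⁅u', v'⁆ = S.X k h (a * b) := by
    rw [map_commutatorElement, hu', hv',
      S.rel5 k j h hk hj hh njk njnk nhj nhnj nhk nhnk, mul_one]
  have hwc : ⁅w, ⁅u', v'⁆⁆ = 1 := hdag i j k h hi hj hk hh hcard b (a * b) w ⁅u', v'⁆ hw hεc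
  have step5 : w * ⁅u', v'⁆ * w⁻¹ = ⁅u', v'⁆ := by
    rw [commutatorElement_eq_one_iff_mul_comm.mp hwc, mul_inv_cancel_right]
  rw [step1, step2, step3, step4, step5]
end
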